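/- arXiv:1012.4849 — 3 statements merged into one kernel-verified Lean document; each statement's English description precedes it below -/
import Mathlib

section
/- Let (a_k)_{k∈ℤ} be nonnegative real numbers satisfying lim_{k→−∞} a_k = 0 and a_{k+1} ≤ 2·a_k for all k ∈ ℤ. For 0 < r < 1 let J(r) = {k ∈ ℤ : a_{k+1} > r·a_k}. Then Σ_{k∈J(r)} a_k ≥ ((1−r)/(3−r)) · Σ_{k∈ℤ} a_k, where both sums are taken in [0,∞]. -/
open Filter ENNReal

/-- If `a : ℤ → ℝ` is nonnegative, `a k → 0` as `k → -∞`, and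
`a (k+1) ≤ 2 * a k` for all `k`, then for `0 < r < 1`,
`∑_{k ∈ J(r)} a k ≥ ((1-r)/(3-r)) ∑_{k ∈ ℤ} a k`, where
`J(r) = {k : a (k+1) > r * a k}` and the sums are taken in `[0,∞]`. -/
theorem stmt_1 (a : ℤ → ℝ) (ha : ∀ k, 0 ≤ a k)
    (hlim : Tendsto a atBot (nhds 0))
    (hdbl : ∀ k, a (k + 1) ≤ 2 * a k)
    (r : ℝ) (hr0 : 0 < r) (hr1 : r < 1) :
    ENNReal.ofReal ((1 - r) / (3 - r)) * ∑' k : ℤ, ENNReal.ofReal (a k) ≤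
      ∑' k : {k : ℤ // r * a k < a (k + 1)}, ENNReal.ofReal (a k.1) := by
  have hr1' : (0:ℝ) < 1 - r := by linarith
  have h3r : (0:ℝ) < 3 - r := by linarith
  set J : Set ℤ := {k | r * a k < a (k + 1)} with hJdef
  set f : ℤ → ℝ≥0∞ := fun k => ENNReal.ofReal (a k) with hfdef
  -- Step A: every k ∉ J with a k ≠ 0 has a greatest element of J below it
  have stepA : ∀ k : ℤ, k ∉ J → a k ≠ 0 →
      ∃ m, m < k ∧ m ∈ J ∧ ∀ z, z < k → z ∈ J → z ≤ m := by
    intro k hk hak0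
    have hak : 0 < a k := lt_of_le_of_ne (ha k) (Ne.symm hak0)
    have hex : ∃ m, m < k ∧ m ∈ J := by
      by_contra hno
      push_neg at hno
      have key : ∀ n : ℕ, a k ≤ a (k - n) := by
        intro n
        induction n with
        | zero => simp
        | succ n ih =>
          have hj : (k - (n + 1) : ℤ) ∉ J := hno _ (by omega)
          have h2 : a (k - (n + 1) + 1) ≤ r * a (k - (n + 1)) := not_lt.mp hj
          have heq : (k - (n + 1) + 1 : ℤ) = k - n := by push_cast; ring
          rw [heq] at h2
          have h3 : r * a (k - (n + 1)) ≤ a (k - (n + 1)) := by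
            nlinarith [ha (k - (n + 1) : ℤ)]
          calc a k ≤ a (k - n) := ih
            _ ≤ a (k - (n + 1)) := le_trans h2 h3
      have hev : ∀ᶠ j in atBot, a j < a k := hlim.eventually (eventually_lt_nhds hak)
      obtain ⟨N, hN⟩ := eventually_atBot.mp hev
      have hle : (k - ((k - N).toNat : ℤ)) ≤ N := by omega
      exact absurd (hN _ hle) (not_lt.mpr (key (k - N).toNat))
    obtain ⟨m, hPm, hmax⟩ := Int.exists_greatest_of_bdd (P := fun m => m < k ∧ m ∈ J)
      ⟨k, fun z hz => le_of_lt hz.1⟩ hex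
    exact ⟨m, hPm.1, hPm.2, fun z h1 h2 => hmax z ⟨h1, h2⟩⟩
  -- Step B: geometric decay after the last J-element
  have stepB : ∀ (k m : ℤ), m < k → (∀ z, z < k → z ∈ J → z ≤ m) →
      a k ≤ 2 * r ^ (k - m - 1).toNat * a m := by
    intro k m hmk hmax
    have claim : ∀ n : ℕ, (m + 1 + n ≤ k) → a (m + 1 + n) ≤ r ^ n * a (m + 1) := by
      intro n
      induction n with
      | zero => intro _; simp
      | succ n ih =>
        intro hle
        have h1 : m + 1 + (n : ℤ) < k := by push_cast at hle ⊢; omega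
        have hnJ : (m + 1 + (n : ℤ)) ∉ J := by
          intro hJ'
          have := hmax _ h1 hJ'
          omega
        have h2 : a (m + 1 + n + 1) ≤ r * a (m + 1 + n) := not_lt.mp hnJ
        have h3 := ih (by push_cast at hle ⊢; omega)
        have heq : (m + 1 + ((n : ℤ) + 1)) = m + 1 + n + 1 := by ring
        have hcast : ((n + 1 : ℕ) : ℤ) = (n : ℤ) + 1 := by push_cast; ring
        rw [hcast, heq]
        calc a (m + 1 + n + 1) ≤ r * a (m + 1 + n) := h2
          _ ≤ r * (r ^ n * a (m + 1)) := by nlinarith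
          _ = r ^ (n + 1) * a (m + 1) := by ring
    have hn : m + 1 + ((k - m - 1).toNat : ℤ) = k := by omega
    have hck := claim (k - m - 1).toNat (by omega)
    rw [hn] at hck
    have h2 := hdbl m
    have hrpow : (0:ℝ) ≤ r ^ (k - m - 1).toNat := pow_nonneg hr0.le _
    nlinarith [mul_le_mul_of_nonneg_left h2 hrpow]
  -- the set of "bad" indices with nonzero value
  set K' : Set ℤ := {k | k ∉ J ∧ a k ≠ 0} with hK'def
  have hKsum : ∑' k : ↥Jᶜ, f k.1 = ∑' k : ↥K', f k.1 := by
    rw [tsum_subtype, tsum_subtype]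
    congr 1
    funext k
    by_cases h1 : k ∈ K'
    · have h2 : k ∈ Jᶜ := h1.1
      rw [Set.indicator_of_mem h2, Set.indicator_of_mem h1]
    · by_cases h2 : k ∈ Jᶜ
      · have hz : a k = 0 := by
          by_contra hzz
          exact h1 ⟨h2, hzz⟩
        rw [Set.indicator_of_mem h2, Set.indicator_of_notMem h1, hfdef]
        simp [hz]
      · rw [Set.indicator_of_notMem h1, Set.indicator_of_notMem h2]
  -- choose the greatest J-element for each bad index
  choose m hlt hmem hmax using fun (k : ↥K') => stepA k.1 k.2.1 k.2.2
  set g : ↥J × ℕ → ℝ≥0∞ := fun p => ENNReal.ofReal (2 * a p.1.1) * (ENNReal.ofReal r) ^ p.2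
    with hgdef
  set φ : ↥K' → ↥J × ℕ := fun k => (⟨m k, hmem k⟩, (k.1 - m k - 1).toNat) with hφdef
  have hinj : Function.Injective φ := by
    intro k k' heq
    have h1 : m k = m k' := congrArg (fun p => (p.1 : ℤ)) heq
    have h2 : (k.1 - m k - 1).toNat = (k'.1 - m k' - 1).toNat := congrArg Prod.snd heq
    have hl1 := hlt k
    have hl2 := hlt k'
    exact Subtype.ext (by omega)
  have hbound : ∀ k : ↥K', f k.1 ≤ g (φ k) := by
    intro k
    have hb := stepB k.1 (m k) (hlt k) (hmax k)
    have : f k.1 ≤ ENNReal.ofReal (2 * a (m k) * r ^ (k.1 - m k - 1).toNat) := by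
      apply ENNReal.ofReal_le_ofReal
      nlinarith
    refine this.trans ?_
    rw [ENNReal.ofReal_mul (by nlinarith [ha (m k)]), ENNReal.ofReal_pow hr0.le]
  have hcomp : ∑' k : ↥K', f k.1 ≤ ∑' p : ↥J × ℕ, g p :=
    ENNReal.summable.tsum_le_tsum_of_inj φ hinj (fun _ _ => zero_le) hbound ENNReal.summable
  have hg : ∑' p : ↥J × ℕ, g p = ENNReal.ofReal (2 / (1 - r)) * ∑' m : ↥J, f m.1 := by
    have hp : ∑' p : ↥J × ℕ, g p
        = ∑' mm : ↥J, ∑' n : ℕ, ENNReal.ofReal (2 * a mm.1) * (ENNReal.ofReal r) ^ n :=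
      ENNReal.tsum_prod (f := fun (mm : ↥J) (n : ℕ) => ENNReal.ofReal (2 * a mm.1) * (ENNReal.ofReal r) ^ n)
    rw [hp]
    have hper : ∀ mm : ↥J, ∑' n : ℕ, ENNReal.ofReal (2 * a mm.1) * (ENNReal.ofReal r) ^ n
        = ENNReal.ofReal (2 / (1 - r)) * f mm.1 := by
      intro mm
      rw [ENNReal.tsum_mul_left, ENNReal.tsum_geometric]
      have h1 : (1 : ℝ≥0∞) - ENNReal.ofReal r = ENNReal.ofReal (1 - r) := by
        rw [ENNReal.ofReal_sub _ hr0.le, ENNReal.ofReal_one]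
      rw [h1, ← ENNReal.ofReal_inv_of_pos hr1', ← ENNReal.ofReal_mul (by nlinarith [ha mm.1])]
      rw [hfdef, ← ENNReal.ofReal_mul (by positivity)]
      congr 1
      field_simp
    calc ∑' (mm : ↥J), ∑' (n : ℕ), ENNReal.ofReal (2 * a mm.1) * (ENNReal.ofReal r) ^ n
        = ∑' (mm : ↥J), ENNReal.ofReal (2 / (1 - r)) * f mm.1 := by
          exact tsum_congr hper
      _ = ENNReal.ofReal (2 / (1 - r)) * ∑' mm : ↥J, f mm.1 := ENNReal.tsum_mul_left
  have hsplit : ∑' k : ℤ, f k = (∑' k : ↥J, f k.1) + ∑' k : ↥Jᶜ, f k.1 :=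
    (Summable.tsum_add_tsum_compl (f := f) ENNReal.summable ENNReal.summable).symm
  have hS : ∑' k : ℤ, f k ≤ (1 + ENNReal.ofReal (2 / (1 - r))) * ∑' k : ↥J, f k.1 := by
    rw [hsplit, add_mul, one_mul]
    refine add_le_add le_rfl ?_
    rw [hKsum]
    exact hcomp.trans hg.le
  have hfinal : ENNReal.ofReal ((1 - r) / (3 - r)) * ∑' k : ℤ, f k ≤ ∑' k : ↥J, f k.1 := by
    calc ENNReal.ofReal ((1 - r) / (3 - r)) * ∑' k : ℤ, f k
        ≤ ENNReal.ofReal ((1 - r) / (3 - r)) *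
            ((1 + ENNReal.ofReal (2 / (1 - r))) * ∑' k : ↥J, f k.1) := mul_le_mul_right hS _
      _ = ∑' k : ↥J, f k.1 := by
          rw [← mul_assoc]
          have h1 : (1 : ℝ≥0∞) + ENNReal.ofReal (2 / (1 - r))
              = ENNReal.ofReal ((3 - r) / (1 - r)) := by
            rw [← ENNReal.ofReal_one, ← ENNReal.ofReal_add (by norm_num) (by positivity)]
            congr 1
            field_simp
            ring
          rw [h1, ← ENNReal.ofReal_mul (by positivity)]
          rw [show (1 - r) / (3 - r) * ((3 - r) / (1 - r)) = 1 by field_simp]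
          simp
  exact hfinal
end

section
/- There is a constant C ≤ 3 (in fact C = 3 works) such that for every L¹-bounded martingale f on a filtered probability space and every λ > 0, one has λ · P(S(f) > λ) ≤ C · ‖f‖₁, where ‖f‖₁ = sup_n E|f_n|. -/
open MeasureTheory ENNReal NNReal

noncomputable section

/-- The difference sequence of a (discrete-time) process: `d 0 = f 0`,
`d n = f n - f (n-1)` for `n ≥ 1`. -/
def martDiff {Ω : Type*} (f : ℕ → Ω → ℝ) : ℕ → Ω → ℝ
  | 0 => f 0
  | (n + 1) => fun ω => f (n + 1) ω - f n ω

/-- The square function `S(f) = (∑ d_n²)^{1/2}`, valued in `[0,∞]`. -/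
def squareFn {Ω : Type*} (f : ℕ → Ω → ℝ) (ω : Ω) : ℝ≥0∞ :=
  (∑' n : ℕ, ENNReal.ofReal ((martDiff f n ω) ^ 2)) ^ (1 / 2 : ℝ)

/-- The martingale norm `‖f‖_p = sup_n (E|f_n|^p)^{1/p}`, valued in `[0,∞]`. -/
def martNorm {Ω : Type*} [MeasurableSpace Ω] (P : Measure Ω) (f : ℕ → Ω → ℝ)
    (p : ℝ) : ℝ≥0∞ :=
  ⨆ n : ℕ, (∫⁻ ω, ENNReal.ofReal |f n ω| ^ p ∂P) ^ (1 / p)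

/-! ### Auxiliary real-variable lemmas -/

/-- clip to `[-lam, lam]` -/
def clipR (lam x : ℝ) : ℝ := max (-lam) (min lam x)

/-- Huber-type function -/
def phiR (lam x : ℝ) : ℝ := x^2 - (max (|x| - lam) 0)^2

lemma clipR_abs_le {lam : ℝ} (hl : 0 ≤ lam) (x : ℝ) : |clipR lam x| ≤ lam := by
  unfold clipR
  rw [abs_le]
  constructor
  · exact le_max_left _ _
  · exact max_le (by linarith) (min_le_left _ _)

lemma phiR_nonneg {lam : ℝ} (hl : 0 ≤ lam) (x : ℝ) : 0 ≤ phiR lam x := by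
  unfold phiR
  have h1 : max (|x| - lam) 0 ≤ |x| := by
    apply max_le (by linarith [abs_nonneg x]) (abs_nonneg x)
  have h2 : (0:ℝ) ≤ max (|x| - lam) 0 := le_max_right _ _
  nlinarith [sq_abs x]

lemma phiR_le {lam : ℝ} (hl : 0 ≤ lam) (x : ℝ) : phiR lam x ≤ 2 * lam * |x| := by
  unfold phiR
  rcases le_or_gt (|x|) lam with h | h
  · have : max (|x| - lam) 0 = 0 := max_eq_right (by linarith)
    rw [this]
    nlinarith [sq_abs x, abs_nonneg x]
  · have : max (|x| - lam) 0 = |x| - lam := max_eq_left (by linarith)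
    rw [this]
    nlinarith [sq_abs x, abs_nonneg x]

lemma phiR_ge {lam : ℝ} (hl : 0 ≤ lam) (x : ℝ) : 2 * lam * |x| - lam^2 ≤ phiR lam x := by
  unfold phiR
  rcases le_or_gt (|x|) lam with h | h
  · have : max (|x| - lam) 0 = 0 := max_eq_right (by linarith)
    rw [this]
    nlinarith [sq_abs x]
  · have : max (|x| - lam) 0 = |x| - lam := max_eq_left (by linarith)
    rw [this]
    nlinarith [sq_abs x]

lemma phiR_eq {lam : ℝ} (x : ℝ) (h : |x| ≤ lam) : phiR lam x = x^2 := by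
  unfold phiR
  have : max (|x| - lam) 0 = 0 := max_eq_right (by linarith)
  rw [this]; ring

lemma continuous_clipR (lam : ℝ) : Continuous (clipR lam) := by
  unfold clipR; fun_prop

lemma continuous_phiR (lam : ℝ) : Continuous (phiR lam) := by
  unfold phiR; fun_prop

lemma sq_key {lam : ℝ} (hl : 0 ≤ lam) (a b : ℝ) :
    (if |a| ≤ lam ∧ |b| ≤ lam then (b - a)^2 else 0) + 2 * clipR lam a * (b - a)
      ≤ phiR lam b - phiR lam a := by
  rcases le_or_gt (|a|) lam with ha | ha
  · have hca : clipR lam a = a := by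
      unfold clipR
      rw [min_eq_right (le_trans (le_abs_self a) ha),
          max_eq_right (by linarith [neg_abs_le a])]
    rw [hca, phiR_eq a ha]
    rcases le_or_gt (|b|) lam with hb | hb
    · rw [if_pos ⟨ha, hb⟩, phiR_eq b hb]; ring_nf; nlinarith []
    · rw [if_neg (fun h => absurd h.2 (not_le.mpr hb))]
      have := phiR_ge hl b
      nlinarith [abs_mul a b, le_abs_self (a*b), abs_nonneg a, abs_nonneg b,
        mul_le_mul_of_nonneg_left hb.le (abs_nonneg a), sq_abs a]
  · rw [if_neg (by intro h; linarith [h.1])]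
    have hpa : phiR lam a = 2 * lam * |a| - lam^2 := by
      unfold phiR
      rw [max_eq_left (by linarith)]; linear_combination -sq_abs a
    have hgb := phiR_ge hl b
    rcases le_or_gt 0 a with ha0 | ha0
    · have haa : |a| = a := abs_of_nonneg ha0
      have hca : clipR lam a = lam := by
        unfold clipR
        rw [min_eq_left (by rw [haa] at ha; linarith), max_eq_right (by linarith)]
      rw [hca, hpa, haa]
      nlinarith [le_abs_self b]
    · have haa : |a| = -a := abs_of_neg ha0
      have hca : clipR lam a = -lam := by
        unfold clipR
        rw [min_eq_right (by rw [haa] at ha; linarith), max_eq_left (by linarith)]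
      rw [hca, hpa, haa]
      nlinarith [neg_abs_le b]

/-! ### The truncated square function summands -/

/-- `qFn f lam n ω = d_n² 1_{|f_{n-1}| ≤ lam, |f_n| ≤ lam}`. -/
def qFn {Ω : Type*} (f : ℕ → Ω → ℝ) (lam : ℝ) (n : ℕ) (ω : Ω) : ℝ :=
  if |f (n-1) ω| ≤ lam ∧ |f n ω| ≤ lam then (martDiff f n ω)^2 else 0

section Mart

variable {Ω : Type*} {m0 : MeasurableSpace Ω} {P : Measure Ω} [IsProbabilityMeasure P]
  {ℱ : Filtration ℕ m0} {f : ℕ → Ω → ℝ} {lam : ℝ}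

lemma meas_f (hf : Martingale f ℱ P) (n : ℕ) : Measurable (f n) :=
  ((hf.stronglyAdapted n).mono (ℱ.le n)).measurable

lemma meas_q (hf : Martingale f ℱ P) (hl : 0 < lam) (n : ℕ) :
    Measurable (qFn f lam n) := by
  unfold qFn
  apply Measurable.ite
  · exact ((measurableSet_le ((meas_f hf (n-1)).abs) measurable_const).inter
      (measurableSet_le ((meas_f hf n).abs) measurable_const))
  · cases n with
    | zero => exact ((meas_f hf 0).pow_const 2)
    | succ k => exact (((meas_f hf (k+1)).sub (meas_f hf k)).pow_const 2)
  · exact measurable_const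

lemma int_q (hf : Martingale f ℱ P) (hl : 0 < lam) (n : ℕ) :
    Integrable (qFn f lam n) P := by
  apply Integrable.mono' (integrable_const ((2*lam)^2)) (meas_q hf hl n).aestronglyMeasurable
  refine Filter.Eventually.of_forall fun ω => ?_
  rw [Real.norm_eq_abs]
  unfold qFn
  split_ifs with h
  · rw [abs_of_nonneg (sq_nonneg _)]
    have hd : |martDiff f n ω| ≤ 2 * lam := by
      cases n with
      | zero => simpa [martDiff] using h.2.trans (by linarith)
      | succ k =>
          simp only [martDiff]
          calc |f (k+1) ω - f k ω| ≤ |f (k+1) ω| + |f k ω| := abs_sub _ _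
          _ ≤ 2 * lam := by have h1 := h.1; have h2 := h.2; simp at h1 h2 ⊢; linarith
    nlinarith [abs_nonneg (martDiff f n ω), sq_abs (martDiff f n ω)]
  · simp; positivity

lemma int_phi (hf : Martingale f ℱ P) (hl : 0 < lam) (n : ℕ) :
    Integrable (fun ω => phiR lam (f n ω)) P := by
  apply Integrable.mono' (((hf.integrable n).abs.const_mul (2*lam)))
    ((continuous_phiR lam).comp_stronglyMeasurable
      ((hf.stronglyAdapted n).mono (ℱ.le n))).aestronglyMeasurable
  refine Filter.Eventually.of_forall fun ω => ?_
  rw [Real.norm_eq_abs, abs_of_nonneg (phiR_nonneg hl.le _)]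
  exact phiR_le hl.le _

lemma cross_zero (hf : Martingale f ℱ P) (hl : 0 < lam) (k : ℕ) :
    ∫ ω, clipR lam (f k ω) * (f (k+1) ω - f k ω) ∂P = 0 := by
  set c : Ω → ℝ := fun ω => clipR lam (f k ω) with hc
  have hcm : StronglyMeasurable[ℱ k] c :=
    (continuous_clipR lam).comp_stronglyMeasurable (hf.stronglyAdapted k)
  have hbdd : ∃ C, ∀ ω, ‖c ω‖ ≤ C := ⟨lam, fun ω => by
    rw [Real.norm_eq_abs]; exact clipR_abs_le hl.le _⟩
  have hcam : AEStronglyMeasurable c P := (hcm.mono (ℱ.le k)).aestronglyMeasurable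
  have h1 : Integrable (c * f (k+1)) P := (hf.integrable (k+1)).bdd_mul hcam (Filter.Eventually.of_forall hbdd.choose_spec)
  have h0 : Integrable (c * f k) P := (hf.integrable k).bdd_mul hcam (Filter.Eventually.of_forall hbdd.choose_spec)
  have e1 : ∫ ω, (c * f (k+1)) ω ∂P = ∫ ω, (c * f k) ω ∂P := by
    calc ∫ ω, (c * f (k+1)) ω ∂P
        = ∫ ω, (P[c * f (k+1)|ℱ k]) ω ∂P := (integral_condExp (ℱ.le k)).symm
      _ = ∫ ω, (c * P[f (k+1)|ℱ k]) ω ∂P := by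
          refine integral_congr_ae (condExp_mul_of_stronglyMeasurable_left hcm h1 (hf.integrable (k+1)))
      _ = ∫ ω, (c * f k) ω ∂P := by
          refine integral_congr_ae ?_
          filter_upwards [hf.condExp_ae_eq (Nat.le_succ k)] with ω hω
          simp only [Pi.mul_apply]
          rw [hω]
  have e1' : ∫ ω, c ω * f (k+1) ω ∂P = ∫ ω, c ω * f k ω ∂P := by
    simpa [Pi.mul_apply] using e1
  have hsub := integral_sub h1 h0
  simp only [Pi.mul_apply] at hsub
  have : ∫ ω, (c ω * f (k+1) ω - c ω * f k ω) ∂P = 0 := by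
    rw [hsub, e1', sub_self]
  calc ∫ ω, c ω * (f (k+1) ω - f k ω) ∂P
      = ∫ ω, (c ω * f (k+1) ω - c ω * f k ω) ∂P := by
        congr 1; funext ω; ring
    _ = 0 := this

lemma step_le (hf : Martingale f ℱ P) (hl : 0 < lam) (k : ℕ) :
    ∫ ω, qFn f lam (k+1) ω ∂P
      ≤ ∫ ω, phiR lam (f (k+1) ω) ∂P - ∫ ω, phiR lam (f k ω) ∂P := by
  have hcross : Integrable (fun ω => 2 * clipR lam (f k ω) * (f (k+1) ω - f k ω)) P := by
    have hcam : AEStronglyMeasurable (fun ω => 2 * clipR lam (f k ω)) P :=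
      (((continuous_clipR lam).comp_stronglyMeasurable (hf.stronglyAdapted k)).mono
        (ℱ.le k)).aestronglyMeasurable.const_mul 2
    exact ((hf.integrable (k+1)).sub (hf.integrable k)).bdd_mul hcam
      (c := 2*lam) (Filter.Eventually.of_forall fun ω => by
        rw [Real.norm_eq_abs, abs_mul]
        have := clipR_abs_le hl.le (f k ω)
        rw [abs_two]
        linarith)
  have hzero : ∫ ω, 2 * clipR lam (f k ω) * (f (k+1) ω - f k ω) ∂P = 0 := by
    have := cross_zero hf hl k
    calc ∫ ω, 2 * clipR lam (f k ω) * (f (k+1) ω - f k ω) ∂P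
        = 2 * ∫ ω, clipR lam (f k ω) * (f (k+1) ω - f k ω) ∂P := by
          rw [← integral_const_mul]; congr 1; funext ω; ring
      _ = 0 := by rw [this]; ring
  have hptwise : ∀ ω, qFn f lam (k+1) ω + 2 * clipR lam (f k ω) * (f (k+1) ω - f k ω)
      ≤ phiR lam (f (k+1) ω) - phiR lam (f k ω) := by
    intro ω
    have := sq_key hl.le (f k ω) (f (k+1) ω)
    simpa [qFn, martDiff] using this
  have hmono : ∫ ω, (qFn f lam (k+1) ω + 2 * clipR lam (f k ω) * (f (k+1) ω - f k ω)) ∂P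
      ≤ ∫ ω, (phiR lam (f (k+1) ω) - phiR lam (f k ω)) ∂P :=
    integral_mono ((int_q hf hl (k+1)).add hcross)
      ((int_phi hf hl (k+1)).sub (int_phi hf hl k)) hptwise
  rw [integral_add (int_q hf hl (k+1)) hcross, hzero, add_zero] at hmono
  rwa [integral_sub (int_phi hf hl (k+1)) (int_phi hf hl k)] at hmono

lemma base_le (hf : Martingale f ℱ P) (hl : 0 < lam) :
    ∫ ω, qFn f lam 0 ω ∂P ≤ ∫ ω, phiR lam (f 0 ω) ∂P := by
  refine integral_mono (int_q hf hl 0) (int_phi hf hl 0) fun ω => ?_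
  unfold qFn
  split_ifs with h
  · simp only [martDiff]
    rw [phiR_eq _ h.2]
  · exact phiR_nonneg hl.le _

lemma sum_le (hf : Martingale f ℱ P) (hl : 0 < lam) (N : ℕ) :
    ∑ k ∈ Finset.range (N+1), ∫ ω, qFn f lam k ω ∂P ≤ ∫ ω, phiR lam (f N ω) ∂P := by
  induction N with
  | zero => simpa using base_le hf hl
  | succ M ih =>
      rw [Finset.sum_range_succ]
      have := step_le hf hl M
      linarith

end Mart

theorem stmt_3 : ∃ C : ℝ≥0, C ≤ 3 ∧
    ∀ (Ω : Type) (m0 : MeasurableSpace Ω) (P : Measure Ω), IsProbabilityMeasure P →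
      ∀ (ℱ : Filtration ℕ m0) (f : ℕ → Ω → ℝ), Martingale f ℱ P →
        martNorm P f 1 < ∞ →
        ∀ lam : ℝ, 0 < lam →
          ENNReal.ofReal lam * P {ω | ENNReal.ofReal lam < squareFn f ω} ≤
            (C : ℝ≥0∞) * martNorm P f 1 := by
  refine ⟨3, le_refl 3, ?_⟩
  intro Ω m0 P hP ℱ f hf _hK lam hlam
  set K := martNorm P f 1 with hKdef
  have hq_nonneg : ∀ n ω, 0 ≤ qFn f lam n ω := by
    intro n ω; unfold qFn; split_ifs
    · positivity
    · exact le_refl 0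
  have hKn : ∀ n, ∫⁻ ω, ENNReal.ofReal |f n ω| ∂P ≤ K := by
    intro n
    rw [hKdef]
    unfold martNorm
    have : ∫⁻ ω, ENNReal.ofReal |f n ω| ∂P
        = (∫⁻ ω, ENNReal.ofReal |f n ω| ^ (1:ℝ) ∂P) ^ ((1:ℝ)/(1:ℝ)) := by
      simp
    rw [this]
    exact le_iSup (fun n => (∫⁻ ω, ENNReal.ofReal |f n ω| ^ (1:ℝ) ∂P) ^ ((1:ℝ)/(1:ℝ))) n
  have hofK : ∀ n, ENNReal.ofReal (∫ ω, |f n ω| ∂P) ≤ K := by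
    intro n
    rw [ofReal_integral_eq_lintegral_ofReal (hf.integrable n).abs
      (Filter.Eventually.of_forall fun ω => abs_nonneg _)]
    exact hKn n
  set A := {ω | ENNReal.ofReal lam < squareFn f ω} with hA
  set B := {ω | ∀ n, |f n ω| ≤ lam} with hB
  -- Part 1: Doob's maximal inequality controls `A \ B`
  have part1 : ENNReal.ofReal lam * P (A \ B) ≤ K := by
    set D : ℕ → Set Ω := fun N => ⋃ k ∈ Finset.range (N+1), {ω | lam ≤ |f k ω|} with hD
    have hmono : Monotone D := by
      intro i j hij ω hω
      rw [Set.mem_iUnion₂] at hω ⊢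
      obtain ⟨k, hk, h⟩ := hω
      exact ⟨k, Finset.mem_range.mpr
        (lt_of_lt_of_le (Finset.mem_range.mp hk) (by omega)), h⟩
    have hsubset : A \ B ⊆ ⋃ N, D N := by
      intro ω hω
      have : ¬ (∀ n, |f n ω| ≤ lam) := hω.2
      push_neg at this
      obtain ⟨n, hn⟩ := this
      exact Set.mem_iUnion.mpr ⟨n, Set.mem_biUnion (Finset.self_mem_range_succ n) hn.le⟩
    have habs : Submartingale (fun n ω => |f n ω|) ℱ P := by
      have h1 : Submartingale (f ⊔ (-f)) ℱ P := hf.submartingale.sup hf.neg.submartingale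
      have h2 : (f ⊔ (-f)) = fun n ω => |f n ω| := by
        funext n ω
        simp only [Pi.sup_apply, Pi.neg_apply]
        rw [abs_eq_max_neg]
      rwa [h2] at h1
    have hDoob : ∀ N, ENNReal.ofReal lam * P (D N) ≤ K := by
      intro N
      have hmax := maximal_ineq (μ := P) (𝒢 := ℱ) habs
        (fun n ω => abs_nonneg _) (ε := lam.toNNReal) N
      have hset : D N = {ω | (lam.toNNReal : ℝ) ≤
          (Finset.range (N + 1)).sup' Finset.nonempty_range_add_one fun k => |f k ω|} := by
        ext ω
        simp only [hD, Set.mem_iUnion, Set.mem_setOf_eq, Finset.le_sup'_iff,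
          Real.coe_toNNReal _ hlam.le, exists_prop]
      have hcoe : (lam.toNNReal : ℝ≥0∞) = ENNReal.ofReal lam := rfl
      rw [hset]
      calc ENNReal.ofReal lam * P {ω | (lam.toNNReal : ℝ) ≤
            (Finset.range (N + 1)).sup' Finset.nonempty_range_add_one fun k => |f k ω|}
          = lam.toNNReal • P {ω | (lam.toNNReal : ℝ) ≤
            (Finset.range (N + 1)).sup' Finset.nonempty_range_add_one fun k => |f k ω|} := by
            rw [ENNReal.smul_def, smul_eq_mul, hcoe]
        _ ≤ ENNReal.ofReal (∫ ω in {ω | (lam.toNNReal : ℝ) ≤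
            (Finset.range (N + 1)).sup' Finset.nonempty_range_add_one fun k => |f k ω|},
              |f N ω| ∂P) := hmax
        _ ≤ ENNReal.ofReal (∫ ω, |f N ω| ∂P) := by
            apply ENNReal.ofReal_le_ofReal
            exact setIntegral_le_integral (hf.integrable N).abs
              (Filter.Eventually.of_forall fun ω => abs_nonneg _)
        _ ≤ K := hofK N
    calc ENNReal.ofReal lam * P (A \ B)
        ≤ ENNReal.ofReal lam * P (⋃ N, D N) := by
          exact mul_le_mul_right (measure_mono hsubset) _
      _ = ENNReal.ofReal lam * ⨆ N, P (D N) := by rw [hmono.measure_iUnion]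
      _ = ⨆ N, ENNReal.ofReal lam * P (D N) := ENNReal.mul_iSup _ _
      _ ≤ K := iSup_le hDoob
  -- Part 2: Chebyshev + the key L¹ estimate controls `A ∩ B`
  have part2 : ENNReal.ofReal lam * P (A ∩ B) ≤ 2 * K := by
    have hQ : ∫⁻ ω, ∑' n, ENNReal.ofReal (qFn f lam n ω) ∂P
        ≤ ENNReal.ofReal (2 * lam) * K := by
      rw [lintegral_tsum (fun n => ((meas_q hf hlam n).ennreal_ofReal).aemeasurable)]
      rw [ENNReal.tsum_eq_iSup_nat]
      refine iSup_le fun N => ?_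
      cases N with
      | zero => simp
      | succ M =>
          have heq : ∑ k ∈ Finset.range (M+1), ∫⁻ ω, ENNReal.ofReal (qFn f lam k ω) ∂P
              = ENNReal.ofReal (∑ k ∈ Finset.range (M+1), ∫ ω, qFn f lam k ω ∂P) := by
            rw [ENNReal.ofReal_sum_of_nonneg
              (fun k _ => integral_nonneg (fun ω => hq_nonneg k ω))]
            refine Finset.sum_congr rfl fun k _ => ?_
            rw [← ofReal_integral_eq_lintegral_ofReal (int_q hf hlam k)
              (Filter.Eventually.of_forall fun ω => hq_nonneg k ω)]
          rw [heq]
          calc ENNReal.ofReal (∑ k ∈ Finset.range (M+1), ∫ ω, qFn f lam k ω ∂P)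
              ≤ ENNReal.ofReal (∫ ω, phiR lam (f M ω) ∂P) :=
                ENNReal.ofReal_le_ofReal (sum_le hf hlam M)
            _ ≤ ENNReal.ofReal (2 * lam * ∫ ω, |f M ω| ∂P) := by
                apply ENNReal.ofReal_le_ofReal
                rw [← integral_const_mul]
                exact integral_mono (int_phi hf hlam M)
                  (((hf.integrable M).abs.const_mul (2*lam)))
                  (fun ω => phiR_le hlam.le _)
            _ = ENNReal.ofReal (2 * lam) * ENNReal.ofReal (∫ ω, |f M ω| ∂P) := by
                rw [ENNReal.ofReal_mul (by positivity)]
            _ ≤ ENNReal.ofReal (2 * lam) * K := mul_le_mul_right (hofK M) _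
    have hsub2 : A ∩ B ⊆ {ω | ENNReal.ofReal lam * ENNReal.ofReal lam
        ≤ ∑' n, ENNReal.ofReal (qFn f lam n ω)} := by
      rintro ω ⟨hωA, hωB⟩
      have hq_eq : ∀ n, qFn f lam n ω = (martDiff f n ω)^2 := by
        intro n; unfold qFn; rw [if_pos ⟨hωB _, hωB _⟩]
      have htsum : ∑' n, ENNReal.ofReal (qFn f lam n ω)
          = ∑' n, ENNReal.ofReal ((martDiff f n ω)^2) := by
        congr 1; funext n; rw [hq_eq n]
      have hlt : ENNReal.ofReal lam < (∑' n, ENNReal.ofReal ((martDiff f n ω)^2)) ^ (1/2 : ℝ) := hωA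
      have h2 : (ENNReal.ofReal lam)^(2:ℕ)
          < ((∑' n, ENNReal.ofReal ((martDiff f n ω)^2)) ^ (1/2 : ℝ))^(2:ℕ) :=
        ENNReal.pow_lt_pow_left two_ne_zero hlt
      rw [← ENNReal.rpow_natCast (_ ^ (1/2:ℝ)) 2, ← ENNReal.rpow_mul] at h2
      norm_num at h2
      rw [Set.mem_setOf_eq, htsum, ← sq]
      exact h2.le
    have hcheb : ENNReal.ofReal lam * ENNReal.ofReal lam * P (A ∩ B)
        ≤ ENNReal.ofReal (2*lam) * K := by
      calc ENNReal.ofReal lam * ENNReal.ofReal lam * P (A ∩ B)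
          ≤ ENNReal.ofReal lam * ENNReal.ofReal lam * P {ω |
              ENNReal.ofReal lam * ENNReal.ofReal lam
                ≤ ∑' n, ENNReal.ofReal (qFn f lam n ω)} :=
            mul_le_mul_right (measure_mono hsub2) _
        _ ≤ ∫⁻ ω, ∑' n, ENNReal.ofReal (qFn f lam n ω) ∂P :=
            mul_meas_ge_le_lintegral₀
              (Measurable.aemeasurable (by
                exact Measurable.ennreal_tsum fun n => (meas_q hf hlam n).ennreal_ofReal)) _
        _ ≤ ENNReal.ofReal (2*lam) * K := hQ
    have hne0 : ENNReal.ofReal lam ≠ 0 := by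
      simp only [ne_eq, ENNReal.ofReal_eq_zero, not_le]; exact hlam
    have h2lam : ENNReal.ofReal (2*lam) = ENNReal.ofReal lam * 2 := by
      rw [ENNReal.ofReal_mul (by norm_num : (0:ℝ) ≤ 2)]
      rw [ENNReal.ofReal_ofNat]
      ring
    rw [h2lam, mul_assoc, mul_assoc] at hcheb
    exact (ENNReal.mul_le_mul_iff_right hne0 ENNReal.ofReal_ne_top).mp hcheb
  calc ENNReal.ofReal lam * P A
      ≤ ENNReal.ofReal lam * (P (A ∩ B) + P (A \ B)) :=
        mul_le_mul_right (measure_le_inter_add_diff P A B) _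
    _ = ENNReal.ofReal lam * P (A ∩ B) + ENNReal.ofReal lam * P (A \ B) := mul_add _ _ _
    _ ≤ 2 * K + K := add_le_add part2 part1
    _ = ((3:ℝ≥0) : ℝ≥0∞) * K := by
        rw [ENNReal.coe_ofNat]
        ring

end
end

section
/- Let ℍ be a real or complex Hilbert space with norm |·|, let 1 < p < ∞, let p* = max(p, q) where 1/p + 1/q = 1, and let α_p = p(1 − 1/p*)^{p−1}. Define V(z,w) = |w|^p − (p*−1)^p|z|^p and U(z,w) = α_p(|w| − (p*−1)|z|)(|z| + |w|)^{p−1} for z, w ∈ ℍ. Then: (i) V(z,w) ≤ U(z,w) for all z, w ∈ ℍ; and (ii) for all z, w, h, k ∈ ℍ with |k| ≤ |h|, the function t ↦ U(z + t·h, w + t·k) is concave on ℝ. -/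
set_option maxHeartbeats 1600000

open NNReal

namespace Stmt19
open Real Set Filter Topology




/-- log x ≥ 1 - 1/x for x > 0 -/
lemma log_ge (x : ℝ) (hx : 0 < x) : 1 - 1/x ≤ Real.log x := by
  have h := Real.log_le_sub_one_of_pos (x := 1/x) (by positivity)
  rw [one_div, Real.log_inv] at h
  have : 1/x = x⁻¹ := one_div x
  nlinarith [h]

/-- `(1+c)^(p-2) ≤ c^(p-1)` for `c = p - 1`, `p ≥ 2`, i.e. `p^(p-2) ≤ (p-1)^(p-1)`. -/
lemma far_ineq1 (p : ℝ) (hp : 2 ≤ p) : (p : ℝ) ^ (p - 2) ≤ (p - 1) ^ (p - 1) := by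
  have hp1 : (0:ℝ) < p - 1 := by linarith
  have hp0 : (0:ℝ) < p := by linarith
  rw [Real.rpow_def_of_pos hp0, Real.rpow_def_of_pos hp1]
  apply Real.exp_le_exp.2
  -- log p ≤ log (p-1) + 1/(p-1)
  have h1 : Real.log p ≤ Real.log (p - 1) + 1 / (p - 1) := by
    have hcalc : p = (p - 1) * (p / (p - 1)) := by field_simp
    have hd : (0:ℝ) < p / (p - 1) := by positivity
    have h2 : Real.log (p / (p - 1)) ≤ p / (p - 1) - 1 := Real.log_le_sub_one_of_pos hd
    have h3 : p / (p - 1) - 1 = 1 / (p - 1) := by field_simp; ring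
    calc Real.log p = Real.log (p - 1) + Real.log (p / (p - 1)) := by
          rw [← Real.log_mul (by positivity) (by positivity)]; rw [← hcalc]
      _ ≤ Real.log (p - 1) + 1 / (p - 1) := by rw [h3] at h2; linarith
  -- log (p-1) ≥ 1 - 1/(p-1)
  have h4 : 1 - 1/(p-1) ≤ Real.log (p - 1) := log_ge _ hp1
  have h5 : (0:ℝ) ≤ p - 2 := by linarith
  have he : (p - 1) * (1/(p-1)) = 1 := by field_simp
  nlinarith [mul_le_mul_of_nonneg_left h1 h5, h4, he]

/-- `(1+c)^(2-p) ≤ c` for `c = 1/(p-1)`, `1 < p ≤ 2`. -/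
lemma far_ineq2 (p : ℝ) (hp1 : 1 < p) (hp2 : p ≤ 2) :
    (p / (p - 1)) ^ (2 - p) ≤ 1 / (p - 1) := by
  have hq : (0:ℝ) < p - 1 := by linarith
  have h0 : (0:ℝ) < p / (p - 1) := by positivity
  rw [Real.rpow_def_of_pos h0]
  rw [show (1:ℝ) / (p-1) = Real.exp (Real.log (1/(p-1))) by
    rw [Real.exp_log (by positivity)]]
  apply Real.exp_le_exp.2
  rw [Real.log_div (by positivity) (by positivity), Real.log_div (by positivity) (by positivity),
    Real.log_one]
  have hlp : Real.log p ≤ p - 1 := Real.log_le_sub_one_of_pos (by linarith)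
  have hlp1 : Real.log (p - 1) ≤ p - 2 := by
    have := Real.log_le_sub_one_of_pos hq; linarith
  nlinarith [hlp, hlp1, Real.log_nonneg hp1.le]




lemma monoOn_of_hasDeriv {f f' : ℝ → ℝ} {a b : ℝ}
    (hcont : ContinuousOn f (Icc a b))
    (hderiv : ∀ t ∈ Ioo a b, HasDerivAt f (f' t) t)
    (hsign : ∀ t ∈ Ioo a b, 0 ≤ f' t) : MonotoneOn f (Icc a b) := by
  apply monotoneOn_of_deriv_nonneg (convex_Icc a b) hcont
  · intro t ht; rw [interior_Icc] at ht
    exact (hderiv t ht).differentiableAt.differentiableWithinAt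
  · intro t ht; rw [interior_Icc] at ht
    rw [(hderiv t ht).deriv]; exact hsign t ht

lemma antiOn_of_hasDeriv {f f' : ℝ → ℝ} {a b : ℝ}
    (hcont : ContinuousOn f (Icc a b))
    (hderiv : ∀ t ∈ Ioo a b, HasDerivAt f (f' t) t)
    (hsign : ∀ t ∈ Ioo a b, f' t ≤ 0) : AntitoneOn f (Icc a b) := by
  apply antitoneOn_of_deriv_nonpos (convex_Icc a b) hcont
  · intro t ht; rw [interior_Icc] at ht
    exact (hderiv t ht).differentiableAt.differentiableWithinAt
  · intro t ht; rw [interior_Icc] at ht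
    rw [(hderiv t ht).deriv]; exact hsign t ht

noncomputable def gf (p c t : ℝ) : ℝ :=
  p * (c/(1+c))^(p-1) * ((1+c)*t - c) - t^p + c^p * (1-t)^p

noncomputable def gf1 (p c t : ℝ) : ℝ :=
  p * (c/(1+c))^(p-1) * (1+c) - p * t^(p-1) - p * c^p * (1-t)^(p-1)

noncomputable def gf2 (p c t : ℝ) : ℝ :=
  -(p*(p-1)) * t^(p-2) + p*(p-1) * c^p * (1-t)^(p-2)

noncomputable def gf3 (p c t : ℝ) : ℝ :=
  -(p*(p-1)*(p-2)) * (t^(p-3) + c^p * (1-t)^(p-3))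

lemma one_sub_hasDeriv (t : ℝ) : HasDerivAt (fun s : ℝ => 1 - s) (-1) t := by
  simpa using (hasDerivAt_id t).const_sub 1

lemma hasDeriv_gf {p c : ℝ} (hp : 1 ≤ p) (t : ℝ) : HasDerivAt (gf p c) (gf1 p c t) t := by
  have h1 : HasDerivAt (fun t : ℝ => p * (c/(1+c))^(p-1) * ((1+c)*t - c))
      (p * (c/(1+c))^(p-1) * (1+c)) t := by
    simpa using (((hasDerivAt_id t).const_mul (1+c)).sub_const c).const_mul
      (p * (c/(1+c))^(p-1))
  have h2 : HasDerivAt (fun t : ℝ => t ^ p) (p * t^(p-1)) t :=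
    Real.hasDerivAt_rpow_const (Or.inr hp)
  have h3 : HasDerivAt (fun t : ℝ => (1-t) ^ p) ((p * (1-t)^(p-1)) * (-1)) t :=
    (Real.hasDerivAt_rpow_const (Or.inr hp)).comp t (one_sub_hasDeriv t)
  have := (h1.sub h2).add (h3.const_mul (c^p))
  refine this.congr_deriv ?_
  unfold gf1; ring

lemma hasDeriv_gf1 {p c t : ℝ} (hp : 1 < p) (ht : 0 < t) (ht1 : t < 1) :
    HasDerivAt (gf1 p c) (gf2 p c t) t := by
  have h2 : HasDerivAt (fun t : ℝ => t ^ (p-1)) ((p-1) * t^(p-1-1)) t :=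
    Real.hasDerivAt_rpow_const (Or.inl (ne_of_gt ht))
  have h3 : HasDerivAt (fun t : ℝ => (1-t) ^ (p-1)) (((p-1) * (1-t)^(p-1-1)) * (-1)) t :=
    (Real.hasDerivAt_rpow_const (Or.inl (by intro hh; linarith [hh] : (1:ℝ) - t ≠ 0))).comp t
      (one_sub_hasDeriv t)
  have := ((hasDerivAt_const t (p * (c/(1+c))^(p-1) * (1+c))).sub (h2.const_mul p)).sub
    (h3.const_mul (p * c^p))
  refine this.congr_deriv ?_
  unfold gf2
  have e : p - 1 - 1 = p - 2 := by ring
  rw [e]; ring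

lemma hasDeriv_gf2 {p c t : ℝ} (ht : 0 < t) (ht1 : t < 1) :
    HasDerivAt (gf2 p c) (gf3 p c t) t := by
  have h2 : HasDerivAt (fun t : ℝ => t ^ (p-2)) ((p-2) * t^(p-2-1)) t :=
    Real.hasDerivAt_rpow_const (Or.inl (ne_of_gt ht))
  have h3 : HasDerivAt (fun t : ℝ => (1-t) ^ (p-2)) (((p-2) * (1-t)^(p-2-1)) * (-1)) t :=
    (Real.hasDerivAt_rpow_const (Or.inl (by intro hh; linarith [hh] : (1:ℝ) - t ≠ 0))).comp t
      (one_sub_hasDeriv t)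
  have := (h2.const_mul (-(p*(p-1)))).add (h3.const_mul (p*(p-1) * c^p))
  refine this.congr_deriv ?_
  unfold gf3
  have e : p - 2 - 1 = p - 3 := by ring
  rw [e]; ring

lemma cont_gf1 {p c : ℝ} (hp : 1 < p) : Continuous (gf1 p c) := by
  have c1 : Continuous fun t : ℝ => t ^ (p-1) := by
    rw [continuous_iff_continuousAt]; intro x
    exact Real.continuousAt_rpow_const x (p-1) (Or.inr (by linarith))
  have c2 : Continuous fun t : ℝ => (1-t) ^ (p-1) :=
    c1.comp (continuous_const.sub continuous_id)
  unfold gf1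
  exact ((continuous_const.sub (continuous_const.mul c1)).sub (continuous_const.mul c2))


lemma g_nonneg {p c : ℝ} (hp : 1 < p) (hc : 1 ≤ c)
    (hfar : (2 ≤ p ∧ (1+c)^(p-2) ≤ c^(p-1)) ∨ (p ≤ 2 ∧ (1+c)^(2-p) ≤ c)) :
    ∀ t ∈ Icc (0:ℝ) 1, 0 ≤ gf p c t := by
  have hc0 : (0:ℝ) < c := by linarith
  have h1c : (0:ℝ) < 1 + c := by linarith
  have hp0 : (0:ℝ) < p := by linarith
  set t0 : ℝ := c / (1+c) with ht0def
  have ht0pos : 0 < t0 := by positivity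
  have ht0lt1 : t0 < 1 := by rw [ht0def, div_lt_one h1c]; linarith
  have h1t0 : 1 - t0 = 1 / (1+c) := by rw [ht0def]; field_simp; ring
  have ht0c : t0 = c * (1 - t0) := by rw [h1t0, ht0def]; field_simp
  have h1t0pos : 0 < 1 - t0 := by linarith
  -- value of g at t0
  have hgt0 : gf p c t0 = 0 := by
    have e1 : (1+c) * t0 - c = 0 := by rw [ht0def]; field_simp; ring
    have e2 : t0 ^ p = c^p * (1-t0)^p := by
      nth_rewrite 1 [ht0c]
      rw [Real.mul_rpow hc0.le h1t0pos.le]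
    unfold gf; rw [e1, e2]; ring
  -- value of g1 at t0
  have hcp : c ^ p = c^(p-1) * c := by
    have h := Real.rpow_add_one (ne_of_gt hc0) (p-1)
    rw [show p - 1 + 1 = p by ring] at h
    exact h
  have ht0p1 : c^(p-1) * (1-t0)^(p-1) = t0^(p-1) := by
    rw [← Real.mul_rpow hc0.le h1t0pos.le, ← ht0c]
  have halpha : (c/(1+c))^(p-1) = t0^(p-1) := by rw [ht0def]
  have hg1t0 : gf1 p c t0 = 0 := by
    unfold gf1
    rw [halpha, hcp]
    have : c^(p-1) * c * (1-t0)^(p-1) = c * t0^(p-1) := by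
      rw [mul_comm (c^(p-1)) c, mul_assoc, ht0p1]
    rw [show p * (c^(p-1) * c) * (1-t0)^(p-1) = p * (c^(p-1) * c * (1-t0)^(p-1)) by ring, this]
    ring
  -- α (1+c) value
  have hαval : p * (c/(1+c))^(p-1) * (1+c) = p * c^(p-1) / (1+c)^(p-2) := by
    rw [Real.div_rpow hc0.le h1c.le]
    have h1cp : (1+c)^(p-1) = (1+c)^(p-2) * (1+c) := by
      rw [show p - 1 = (p-2) + 1 by ring, Real.rpow_add_one (ne_of_gt h1c)]
    rw [h1cp]
    have hne1 : (1+c)^(p-2) ≠ 0 := ne_of_gt (Real.rpow_pos_of_pos h1c _)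
    field_simp
  intro t htmem
  obtain ⟨ht0le, ht1le⟩ := htmem
  rcases hfar with ⟨hp2, hfar1⟩ | ⟨hp2, hfar2⟩
  · -- case p ≥ 2
    -- near side: g2 ≥ 0 on Ioo 0 t0
    have hg2near : ∀ s ∈ Ioo (0:ℝ) t0, 0 ≤ gf2 p c s := by
      intro s hs
      obtain ⟨hs0, hst0⟩ := hs
      have hs1 : s < 1 := lt_trans hst0 ht0lt1
      have hsc : s ≤ c * (1 - s) := by
        have h : s * (1+c) < c := by
          rw [ht0def, div_eq_mul_inv] at hst0
          calc s * (1+c) < (c * (1+c)⁻¹) * (1+c) := mul_lt_mul_of_pos_right hst0 h1c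
            _ = c := by field_simp
        nlinarith [h]
      have h1 : s^(p-2) ≤ (c*(1-s))^(p-2) :=
        Real.rpow_le_rpow hs0.le hsc (by linarith)
      have h2 : (c*(1-s))^(p-2) = c^(p-2) * (1-s)^(p-2) :=
        Real.mul_rpow hc0.le (by linarith)
      have h3 : c^(p-2) ≤ c^p := Real.rpow_le_rpow_of_exponent_le hc (by linarith)
      have h4 : (0:ℝ) ≤ (1-s)^(p-2) := Real.rpow_nonneg (by linarith) _
      have h5 : s^(p-2) ≤ c^p * (1-s)^(p-2) := by
        calc s^(p-2) ≤ c^(p-2) * (1-s)^(p-2) := by rw [← h2]; exact h1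
          _ ≤ c^p * (1-s)^(p-2) := mul_le_mul_of_nonneg_right h3 h4
      unfold gf2
      nlinarith [mul_le_mul_of_nonneg_left h5
        (mul_nonneg hp0.le (by linarith : (0:ℝ) ≤ p - 1))]
    -- g1 ≤ 0 on Icc 0 t0
    have hg1near : ∀ s ∈ Icc (0:ℝ) t0, gf1 p c s ≤ 0 := by
      have hmono : MonotoneOn (gf1 p c) (Icc 0 t0) := by
        apply monoOn_of_hasDeriv ((cont_gf1 hp).continuousOn)
        · intro s hs; exact hasDeriv_gf1 hp hs.1 (lt_trans hs.2 ht0lt1)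
        · exact hg2near
      intro s hs
      have := hmono hs (right_mem_Icc.mpr (by linarith)) hs.2
      rw [hg1t0] at this; exact this
    -- far side: g1 concave on Icc 0 1
    have hconc : ConcaveOn ℝ (Icc (0:ℝ) 1) (gf1 p c) := by
      apply concaveOn_of_deriv2_nonpos (convex_Icc 0 1) ((cont_gf1 hp).continuousOn)
      · intro s hs; rw [interior_Icc] at hs
        exact (hasDeriv_gf1 hp hs.1 hs.2).differentiableAt.differentiableWithinAt
      · intro s hs; rw [interior_Icc] at hs
        have hev : deriv (gf1 p c) =ᶠ[nhds s] gf2 p c := by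
          filter_upwards [isOpen_Ioo.mem_nhds hs] with y hy
          exact (hasDeriv_gf1 hp hy.1 hy.2).deriv
        exact ((hasDeriv_gf2 hs.1 hs.2).congr_of_eventuallyEq hev).differentiableAt.differentiableWithinAt
      · intro s hs; rw [interior_Icc] at hs
        have hev : deriv (gf1 p c) =ᶠ[nhds s] gf2 p c := by
          filter_upwards [isOpen_Ioo.mem_nhds hs] with y hy
          exact (hasDeriv_gf1 hp hy.1 hy.2).deriv
        have h2 : deriv^[2] (gf1 p c) s = deriv (deriv (gf1 p c)) s := by
          simp [Function.iterate_succ_apply']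
        rw [h2, hev.deriv_eq, (hasDeriv_gf2 hs.1 hs.2).deriv]
        unfold gf3
        have n1 : (0:ℝ) ≤ s^(p-3) := Real.rpow_nonneg hs.1.le _
        have n2 : (0:ℝ) ≤ c^p := Real.rpow_nonneg hc0.le _
        have n3 : (0:ℝ) ≤ (1-s)^(p-3) := Real.rpow_nonneg (by linarith [hs.2]) _
        nlinarith [mul_nonneg (mul_nonneg (mul_nonneg hp0.le
          (by linarith : (0:ℝ) ≤ p - 1)) (by linarith : (0:ℝ) ≤ p - 2))
          (add_nonneg n1 (mul_nonneg n2 n3))]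
    -- g1 1 ≥ 0
    have hg11 : 0 ≤ gf1 p c 1 := by
      unfold gf1
      rw [Real.one_rpow, show (1:ℝ) - 1 = 0 by ring,
        Real.zero_rpow (by intro hh; linarith [hh] : p - 1 ≠ 0)]
      have hpow : (0:ℝ) < (1+c)^(p-2) := Real.rpow_pos_of_pos h1c _
      have key : p ≤ p * (c/(1+c))^(p-1) * (1+c) := by
        rw [hαval, le_div_iff₀ hpow]
        exact mul_le_mul_of_nonneg_left hfar1 hp0.le
      nlinarith [key]
    -- g1 ≥ 0 on Icc t0 1
    have hg1far : ∀ s ∈ Icc t0 1, 0 ≤ gf1 p c s := by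
      intro s hs
      have hseg : s ∈ segment ℝ t0 1 := by
        rw [segment_eq_Icc ht0lt1.le]; exact hs
      have := hconc.ge_on_segment (x := t0) (y := 1)
        ⟨ht0pos.le, ht0lt1.le⟩ ⟨by linarith, le_refl 1⟩ hseg
      rw [hg1t0] at this
      have hmin := le_min (le_refl (0:ℝ)) hg11
      calc (0:ℝ) ≤ min 0 (gf1 p c 1) := hmin
        _ ≤ gf1 p c s := this
    -- now split t position
    rcases le_or_gt t t0 with htpos | htpos
    · -- t ∈ [0, t0]: g antitone there
      have hanti : AntitoneOn (gf p c) (Icc 0 t0) := by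
        apply antiOn_of_hasDeriv
        · exact (Differentiable.continuous (fun s => (hasDeriv_gf hp.le s).differentiableAt)).continuousOn
        · intro s hs; exact hasDeriv_gf hp.le s
        · intro s hs; exact hg1near s ⟨hs.1.le, hs.2.le⟩
      have := hanti ⟨ht0le, htpos⟩ (right_mem_Icc.mpr ht0pos.le) htpos
      rw [hgt0] at this; linarith
    · -- t ∈ [t0, 1]: g monotone there
      have hmono : MonotoneOn (gf p c) (Icc t0 1) := by
        apply monoOn_of_hasDeriv
        · exact (Differentiable.continuous (fun s => (hasDeriv_gf hp.le s).differentiableAt)).continuousOn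
        · intro s hs; exact hasDeriv_gf hp.le s
        · intro s hs; exact hg1far s ⟨hs.1.le, hs.2.le⟩
      have := hmono (left_mem_Icc.mpr ht0lt1.le) ⟨htpos.le, ht1le⟩ htpos.le
      rw [hgt0] at this; linarith
  · -- case p ≤ 2
    have hpow : (0:ℝ) < (1+c)^(p-2) := Real.rpow_pos_of_pos h1c _
    -- near side: g2 ≥ 0 on Ioo t0 1
    have hg2near : ∀ s ∈ Ioo t0 1, 0 ≤ gf2 p c s := by
      intro s hs
      obtain ⟨hst0, hs1⟩ := hs
      have hs0 : 0 < s := lt_trans ht0pos hst0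
      have h1s : 0 < 1 - s := by linarith
      have hsc : c * (1 - s) ≤ s := by
        have h : c < s * (1+c) := by
          rw [ht0def, div_eq_mul_inv] at hst0
          calc c = (c * (1+c)⁻¹) * (1+c) := by field_simp
            _ < s * (1+c) := mul_lt_mul_of_pos_right hst0 h1c
        nlinarith [h]
      have b1 : (c*(1-s))^(2-p) ≤ s^(2-p) :=
        Real.rpow_le_rpow (by positivity) hsc (by linarith)
      have b2 : (c*(1-s))^(2-p) = c^(2-p) * (1-s)^(2-p) := Real.mul_rpow hc0.le h1s.le
      have h3 : c^p * c^(2-p) = c * c := by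
        rw [← Real.rpow_add hc0, show p + (2-p) = (2:ℝ) by ring,
          show (2:ℝ) = ((2:ℕ):ℝ) by norm_num, Real.rpow_natCast]
        ring
      have hA : 0 < s^(2-p) := Real.rpow_pos_of_pos hs0 _
      have hB : 0 < (1-s)^(2-p) := Real.rpow_pos_of_pos h1s _
      have hcpnn : (0:ℝ) ≤ c^p := Real.rpow_nonneg hc0.le _
      have key : (1-s)^(2-p) ≤ c^p * s^(2-p) := by
        have h1 : c^p * (c*(1-s))^(2-p) ≤ c^p * s^(2-p) :=
          mul_le_mul_of_nonneg_left b1 hcpnn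
        have h2 : c^p * (c*(1-s))^(2-p) = (c*c) * (1-s)^(2-p) := by
          rw [b2, ← mul_assoc, h3]
        have hcc : (1:ℝ) ≤ c * c := by nlinarith
        nlinarith [h1, h2, mul_le_mul_of_nonneg_right hcc hB.le]
      have e1 : s^(p-2) = (s^(2-p))⁻¹ := by
        rw [← Real.rpow_neg hs0.le, show -(2-p) = p-2 by ring]
      have e2 : (1-s)^(p-2) = ((1-s)^(2-p))⁻¹ := by
        rw [← Real.rpow_neg h1s.le, show -(2-p) = p-2 by ring]
      have hmain : s^(p-2) ≤ c^p * (1-s)^(p-2) := by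
        rw [e1, e2]
        have hdiv : (1-s)^(2-p) / s^(2-p) ≤ c^p := (div_le_iff₀ hA).2 (by nlinarith [key])
        calc (s^(2-p))⁻¹ = ((1-s)^(2-p) / s^(2-p)) * ((1-s)^(2-p))⁻¹ := by field_simp
          _ ≤ c^p * ((1-s)^(2-p))⁻¹ := mul_le_mul_of_nonneg_right hdiv (by positivity)
      unfold gf2
      nlinarith [mul_le_mul_of_nonneg_left hmain
        (mul_nonneg hp0.le (by linarith : (0:ℝ) ≤ p - 1))]
    -- g1 ≥ 0 on Icc t0 1
    have hg1near : ∀ s ∈ Icc t0 1, 0 ≤ gf1 p c s := by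
      have hmono : MonotoneOn (gf1 p c) (Icc t0 1) := by
        apply monoOn_of_hasDeriv ((cont_gf1 hp).continuousOn)
        · intro s hs; exact hasDeriv_gf1 hp (lt_trans ht0pos hs.1) hs.2
        · exact hg2near
      intro s hs
      have := hmono (left_mem_Icc.mpr ht0lt1.le) hs hs.1
      rw [hg1t0] at this; exact this
    -- far side: g1 convex on Icc 0 1
    have hconv : ConvexOn ℝ (Icc (0:ℝ) 1) (gf1 p c) := by
      apply convexOn_of_deriv2_nonneg (convex_Icc 0 1) ((cont_gf1 hp).continuousOn)
      · intro s hs; rw [interior_Icc] at hs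
        exact (hasDeriv_gf1 hp hs.1 hs.2).differentiableAt.differentiableWithinAt
      · intro s hs; rw [interior_Icc] at hs
        have hev : deriv (gf1 p c) =ᶠ[nhds s] gf2 p c := by
          filter_upwards [isOpen_Ioo.mem_nhds hs] with y hy
          exact (hasDeriv_gf1 hp hy.1 hy.2).deriv
        exact ((hasDeriv_gf2 hs.1 hs.2).congr_of_eventuallyEq hev).differentiableAt.differentiableWithinAt
      · intro s hs; rw [interior_Icc] at hs
        have hev : deriv (gf1 p c) =ᶠ[nhds s] gf2 p c := by
          filter_upwards [isOpen_Ioo.mem_nhds hs] with y hy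
          exact (hasDeriv_gf1 hp hy.1 hy.2).deriv
        have h2 : deriv^[2] (gf1 p c) s = deriv (deriv (gf1 p c)) s := by
          simp [Function.iterate_succ_apply']
        rw [h2, hev.deriv_eq, (hasDeriv_gf2 hs.1 hs.2).deriv]
        unfold gf3
        have n1 : (0:ℝ) ≤ s^(p-3) := Real.rpow_nonneg hs.1.le _
        have n2 : (0:ℝ) ≤ c^p := Real.rpow_nonneg hc0.le _
        have n3 : (0:ℝ) ≤ (1-s)^(p-3) := Real.rpow_nonneg (by linarith [hs.2]) _
        nlinarith [mul_nonneg (mul_nonneg (mul_nonneg hp0.le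
          (by linarith : (0:ℝ) ≤ p - 1)) (by linarith : (0:ℝ) ≤ 2 - p))
          (add_nonneg n1 (mul_nonneg n2 n3))]
    -- g1 0 ≤ 0
    have hg10 : gf1 p c 0 ≤ 0 := by
      unfold gf1
      rw [Real.zero_rpow (by intro hh; linarith [hh] : p - 1 ≠ 0),
        show (1:ℝ) - 0 = 1 by ring, Real.one_rpow]
      have hone : (1:ℝ) ≤ c * (1+c)^(p-2) := by
        have h := mul_le_mul_of_nonneg_right hfar2 hpow.le
        rw [← Real.rpow_add h1c, show 2 - p + (p-2) = (0:ℝ) by ring, Real.rpow_zero] at h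
        linarith [h]
      have key : p * (c/(1+c))^(p-1) * (1+c) ≤ p * c^p := by
        rw [hαval, div_le_iff₀ hpow]
        calc p * c^(p-1) = p * c^(p-1) * 1 := by ring
          _ ≤ p * c^(p-1) * (c * (1+c)^(p-2)) := by
              apply mul_le_mul_of_nonneg_left hone
              positivity
          _ = p * c^p * (1+c)^(p-2) := by rw [hcp]; ring
      nlinarith [key]
    -- g1 ≤ 0 on Icc 0 t0
    have hg1far : ∀ s ∈ Icc (0:ℝ) t0, gf1 p c s ≤ 0 := by
      intro s hs
      have hseg : s ∈ segment ℝ (0:ℝ) t0 := by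
        rw [segment_eq_Icc ht0pos.le]; exact hs
      have := hconv.le_on_segment (x := (0:ℝ)) (y := t0)
        ⟨le_refl 0, by linarith⟩ ⟨ht0pos.le, ht0lt1.le⟩ hseg
      rw [hg1t0] at this
      calc gf1 p c s ≤ max (gf1 p c 0) 0 := this
        _ ≤ 0 := max_le hg10 (le_refl 0)
    rcases le_or_gt t t0 with htpos | htpos
    · have hanti : AntitoneOn (gf p c) (Icc 0 t0) := by
        apply antiOn_of_hasDeriv
        · exact (Differentiable.continuous (fun s => (hasDeriv_gf hp.le s).differentiableAt)).continuousOn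
        · intro s hs; exact hasDeriv_gf hp.le s
        · intro s hs; exact hg1far s ⟨hs.1.le, hs.2.le⟩
      have := hanti ⟨ht0le, htpos⟩ (right_mem_Icc.mpr ht0pos.le) htpos
      rw [hgt0] at this; linarith
    · have hmono : MonotoneOn (gf p c) (Icc t0 1) := by
        apply monoOn_of_hasDeriv
        · exact (Differentiable.continuous (fun s => (hasDeriv_gf hp.le s).differentiableAt)).continuousOn
        · intro s hs; exact hasDeriv_gf hp.le s
        · intro s hs; exact hg1near s ⟨hs.1.le, hs.2.le⟩
      have := hmono (left_mem_Icc.mpr ht0lt1.le) ⟨htpos.le, ht1le⟩ htpos.le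
      rw [hgt0] at this; linarith

lemma scalar_main {p c : ℝ} (hp : 1 < p) (hc : 1 ≤ c)
    (hfar : (2 ≤ p ∧ (1+c)^(p-2) ≤ c^(p-1)) ∨ (p ≤ 2 ∧ (1+c)^(2-p) ≤ c))
    (x y : ℝ) (hx : 0 ≤ x) (hy : 0 ≤ y) :
    y^p - c^p * x^p ≤ p * (c/(1+c))^(p-1) * (y - c*x) * (x+y)^(p-1) := by
  have hpne : p ≠ 0 := by positivity
  have hp1ne : p - 1 ≠ 0 := by intro h; linarith [h]
  rcases eq_or_lt_of_le (add_nonneg hx hy) with h0 | hs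
  · have hx0 : x = 0 := by linarith
    have hy0 : y = 0 := by linarith
    subst hx0; subst hy0
    rw [Real.zero_rpow hpne, show (0:ℝ) + 0 = 0 by ring, Real.zero_rpow hp1ne]
    ring_nf
    simp [le_refl]
  · set s : ℝ := x + y with hsdef
    have hyles : y ≤ s := by rw [hsdef]; linarith
    have htmem : y/s ∈ Icc (0:ℝ) 1 := ⟨by positivity, by rw [div_le_one hs]; exact hyles⟩
    have hg := g_nonneg hp hc hfar (y/s) htmem
    have hsp : (0:ℝ) < s^p := Real.rpow_pos_of_pos hs p
    have key : 0 ≤ s^p * gf p c (y/s) := mul_nonneg hsp.le hg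
    have e0 : s ^ p = s^(p-1) * s := by
      have h := Real.rpow_add_one (ne_of_gt hs) (p-1)
      rw [show p - 1 + 1 = p by ring] at h
      exact h
    have e1 : (y/s)^p * s^p = y^p := by
      rw [← Real.mul_rpow (by positivity) hs.le]
      congr 1
      field_simp
    have e2 : (1 - y/s)^p * s^p = x^p := by
      have h1 : (0:ℝ) ≤ 1 - y/s := by
        rw [sub_nonneg, div_le_one hs]; exact hyles
      rw [← Real.mul_rpow h1 hs.le]
      congr 1
      field_simp
      rw [hsdef]; ring
    have e3 : ((1+c)*(y/s) - c) * s = y - c*x := by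
      field_simp
      rw [hsdef]; ring
    have expand : s^p * gf p c (y/s)
        = p*(c/(1+c))^(p-1) * (y - c*x) * s^(p-1) - y^p + c^p * x^p := by
      rw [← e3, ← e1, ← e2]
      unfold gf
      rw [e0]
      ring
    rw [expand] at key
    linarith [key]



/-- Generic second-derivative concavity lemma for `t ↦ (d·y − e·x)(x+y)^{p-1}`. -/
lemma core_general (p d e : ℝ) (hp : 1 < p) (x y u v wx wy : ℝ → ℝ)
    (hx : ∀ t, HasDerivAt x (u t) t) (hu : ∀ t, HasDerivAt u (wx t) t)
    (hy : ∀ t, HasDerivAt y (v t) t) (hv : ∀ t, HasDerivAt v (wy t) t)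
    (hapos : ∀ t, 0 < x t + y t)
    (hBr : ∀ t, (d * wy t - e * wx t) * (x t + y t)^2
        + 2*(p-1) * (d * v t - e * u t) * (x t + y t) * (u t + v t)
        + (p-1)*(p-2) * (d * y t - e * x t) * (u t + v t)^2
        + (p-1) * (d * y t - e * x t) * (x t + y t) * (wx t + wy t) ≤ 0) :
    ConcaveOn ℝ univ (fun t => (d * y t - e * x t) * (x t + y t)^(p-1)) := by
  set ψ1 : ℝ → ℝ := fun t => (d * v t - e * u t) * (x t + y t)^(p-1)
    + (d * y t - e * x t) * ((p-1) * (x t + y t)^(p-2) * (u t + v t)) with hψ1def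
  set ψ2 : ℝ → ℝ := fun t => (x t + y t)^(p-3) *
    ((d * wy t - e * wx t) * (x t + y t)^2
      + 2*(p-1) * (d * v t - e * u t) * (x t + y t) * (u t + v t)
      + (p-1)*(p-2) * (d * y t - e * x t) * (u t + v t)^2
      + (p-1) * (d * y t - e * x t) * (x t + y t) * (wx t + wy t)) with hψ2def
  have ha : ∀ t, HasDerivAt (fun t => x t + y t) (u t + v t) t := fun t => (hx t).add (hy t)
  have hs : ∀ t, HasDerivAt (fun t => d * y t - e * x t) (d * v t - e * u t) t :=
    fun t => ((hy t).const_mul d).sub ((hx t).const_mul e)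
  have hane : ∀ t, x t + y t ≠ 0 := fun t => ne_of_gt (hapos t)
  have e2 : ∀ t, (x t + y t)^(p-2) = (x t + y t)^(p-3) * (x t + y t) := by
    intro t
    have h := Real.rpow_add_one (hane t) (p-3)
    rw [show p - 3 + 1 = p - 2 by ring] at h
    exact h
  have e1 : ∀ t, (x t + y t)^(p-1) = (x t + y t)^(p-2) * (x t + y t) := by
    intro t
    have h := Real.rpow_add_one (hane t) (p-2)
    rw [show p - 2 + 1 = p - 1 by ring] at h
    exact h
  have hP1 : ∀ t, HasDerivAt (fun t => (x t + y t)^(p-1))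
      ((p-1) * (x t + y t)^(p-1-1) * (u t + v t)) t := by
    intro t
    exact (Real.hasDerivAt_rpow_const (Or.inl (hane t))).comp t (ha t)
  have hP2 : ∀ t, HasDerivAt (fun t => (x t + y t)^(p-2))
      ((p-2) * (x t + y t)^(p-2-1) * (u t + v t)) t := by
    intro t
    exact (Real.hasDerivAt_rpow_const (Or.inl (hane t))).comp t (ha t)
  have hψ : ∀ t, HasDerivAt (fun t => (d * y t - e * x t) * (x t + y t)^(p-1)) (ψ1 t) t := by
    intro t
    have h := (hs t).mul (hP1 t)
    refine h.congr_deriv ?_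
    all_goals simp only [hψ1def]
    all_goals rw [show p - 1 - 1 = p - 2 by ring]
    all_goals ring
  have hψ1' : ∀ t, HasDerivAt ψ1 (ψ2 t) t := by
    intro t
    have hterm1 := (((hv t).const_mul d).sub ((hu t).const_mul e)).mul (hP1 t)
    have hinner := ((hP2 t).const_mul (p-1)).mul ((hu t).add (hv t))
    have hterm2 := (hs t).mul hinner
    have h := hterm1.add hterm2
    refine h.congr_deriv ?_
    all_goals simp only [hψ2def, Pi.sub_apply, Pi.mul_apply, Pi.add_apply]
    all_goals rw [e1 t, e2 t, show p - 1 - 1 = p - 2 by ring, show p - 2 - 1 = p - 3 by ring, e2 t]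
    all_goals ring
  have hd : Differentiable ℝ (fun t => (d * y t - e * x t) * (x t + y t)^(p-1)) :=
    fun t => (hψ t).differentiableAt
  have hderiv_eq : deriv (fun t => (d * y t - e * x t) * (x t + y t)^(p-1)) = ψ1 :=
    funext fun t => (hψ t).deriv
  apply concaveOn_of_deriv2_nonpos convex_univ hd.continuous.continuousOn
  · intro t _
    exact (hψ t).differentiableAt.differentiableWithinAt
  · intro t _
    rw [hderiv_eq]
    exact (hψ1' t).differentiableAt.differentiableWithinAt
  · intro t _
    have h2 : deriv^[2] (fun t => (d * y t - e * x t) * (x t + y t)^(p-1)) t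
        = deriv (deriv (fun t => (d * y t - e * x t) * (x t + y t)^(p-1))) t := by
      simp [Function.iterate_succ_apply']
    rw [h2, hderiv_eq, (hψ1' t).deriv, hψ2def]
    simp only []
    have hp3 : (0:ℝ) < (x t + y t)^(p-3) := Real.rpow_pos_of_pos (hapos t) _
    exact mul_nonpos_of_nonneg_of_nonpos hp3.le (hBr t)

/-- Br inequality, case p ≥ 2 (d = 1, e = p-1). -/
lemma case1_Br (p H2 K2 X Y U V WX WY : ℝ) (hp2 : 2 ≤ p) (hX : 0 < X) (hY : 0 < Y)
    (hWX : X * WX = H2 - U^2) (hWY : Y * WY = K2 - V^2)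
    (hub : U^2 ≤ H2) (hvb : V^2 ≤ K2) (hKH : K2 ≤ H2) :
    (1 * WY - (p-1) * WX) * (X + Y)^2
      + 2*(p-1) * (1 * V - (p-1) * U) * (X + Y) * (U + V)
      + (p-1)*(p-2) * (1 * Y - (p-1) * X) * (U + V)^2
      + (p-1) * (1 * Y - (p-1) * X) * (X + Y) * (WX + WY) ≤ 0 := by
  have hp0 : (0:ℝ) < p := by linarith
  have hxy : (0:ℝ) < X * Y := mul_pos hX hY
  set CY : ℝ := p*(p-1)*(V^2-U^2) - p*(p-1)*(H2-U^2) + p*(K2-V^2) with hCYdef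
  set CX : ℝ := -(p*(p-1)*(p-2))*(U+V)^2 + p*(p-1)*(V^2-U^2) - p*(p-1)*(H2-U^2) + p*(K2-V^2)
    with hCXdef
  have key : ((1 * WY - (p-1) * WX) * (X + Y)^2
      + 2*(p-1) * (1 * V - (p-1) * U) * (X + Y) * (U + V)
      + (p-1)*(p-2) * (1 * Y - (p-1) * X) * (U + V)^2
      + (p-1) * (1 * Y - (p-1) * X) * (X + Y) * (WX + WY)) * (X * Y)
      = X*Y*(X*CX + Y*CY) - p*(p-2)*(X+Y)*(K2-V^2)*X^2 := by
    rw [hCYdef, hCXdef]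
    linear_combination (((p-1)*(X+Y)*((1*Y-(p-1)*X) - (X+Y)))*Y) * hWX
      + (((X+Y)^2 + (p-1)*(1*Y-(p-1)*X)*(X+Y))*X) * hWY
  have hCY : CY ≤ 0 := by
    rw [hCYdef]
    nlinarith [mul_nonneg (sub_nonneg.2 hvb) (by linarith : (0:ℝ) ≤ p - 2),
      mul_nonneg (sub_nonneg.2 hKH) (by linarith : (0:ℝ) ≤ p - 1)]
  have hCX : CX ≤ 0 := by
    rw [hCXdef]
    have hvH : V^2 ≤ H2 := le_trans hvb hKH
    nlinarith [mul_nonneg (mul_nonneg (mul_nonneg hp0.le (by linarith : (0:ℝ) ≤ p-1))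
        (by linarith : (0:ℝ) ≤ p-2)) (sq_nonneg (U+V)),
      mul_nonneg (sub_nonneg.2 hvH) (by linarith : (0:ℝ) ≤ p - 2)]
  have hdrop : 0 ≤ p*(p-2)*(X+Y)*(K2-V^2)*X^2 := by
    apply mul_nonneg
    apply mul_nonneg
    apply mul_nonneg
    · apply mul_nonneg hp0.le; linarith
    · linarith
    · linarith
    · exact sq_nonneg X
  have hble : ((1 * WY - (p-1) * WX) * (X + Y)^2
      + 2*(p-1) * (1 * V - (p-1) * U) * (X + Y) * (U + V)
      + (p-1)*(p-2) * (1 * Y - (p-1) * X) * (U + V)^2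
      + (p-1) * (1 * Y - (p-1) * X) * (X + Y) * (WX + WY)) * (X * Y) ≤ 0 := by
    rw [key]
    have h1 : X*CX + Y*CY ≤ 0 :=
      add_nonpos (mul_nonpos_of_nonneg_of_nonpos hX.le hCX)
        (mul_nonpos_of_nonneg_of_nonpos hY.le hCY)
    nlinarith [mul_nonpos_of_nonneg_of_nonpos hxy.le h1]
  by_contra hcon
  push_neg at hcon
  nlinarith [mul_pos hcon hxy]

/-- Br inequality, case 1 < p ≤ 2 (d = p-1, e = 1). -/
lemma case2_Br (p H2 K2 X Y U V WX WY : ℝ) (hp1 : 1 < p) (hp2 : p ≤ 2) (hX : 0 < X) (hY : 0 < Y)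
    (hWX : X * WX = H2 - U^2) (hWY : Y * WY = K2 - V^2)
    (hub : U^2 ≤ H2) (hvb : V^2 ≤ K2) (hKH : K2 ≤ H2) :
    ((p-1) * WY - 1 * WX) * (X + Y)^2
      + 2*(p-1) * ((p-1) * V - 1 * U) * (X + Y) * (U + V)
      + (p-1)*(p-2) * ((p-1) * Y - 1 * X) * (U + V)^2
      + (p-1) * ((p-1) * Y - 1 * X) * (X + Y) * (WX + WY) ≤ 0 := by
  have hp0 : (0:ℝ) < p := by linarith
  have hxy : (0:ℝ) < X * Y := mul_pos hX hY
  set DY : ℝ := -(p*((2-p)*(H2-U^2) + (p-1)*(H2-K2) + (p-1)*(2-p)*(U+V)^2)) with hDYdef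
  set DX : ℝ := -(p*((2-p)*(H2-U^2) + (p-1)*(H2-K2))) with hDXdef
  have key : (((p-1) * WY - 1 * WX) * (X + Y)^2
      + 2*(p-1) * ((p-1) * V - 1 * U) * (X + Y) * (U + V)
      + (p-1)*(p-2) * ((p-1) * Y - 1 * X) * (U + V)^2
      + (p-1) * ((p-1) * Y - 1 * X) * (X + Y) * (WX + WY)) * (X * Y)
      = X*Y*(X*DX + Y*DY) - p*(2-p)*(X+Y)*Y^2*(H2-U^2) := by
    rw [hDYdef, hDXdef]
    linear_combination ((-(X+Y)^2 + (p-1)*((p-1)*Y-X)*(X+Y))*Y) * hWX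
      + (((p-1)*(X+Y)^2 + (p-1)*((p-1)*Y-X)*(X+Y))*X) * hWY
  have hDY : DY ≤ 0 := by
    rw [hDYdef]
    nlinarith [hub, hKH, sq_nonneg (U+V),
      mul_nonneg (sub_nonneg.2 hub) (by linarith : (0:ℝ) ≤ 2-p),
      mul_nonneg (sub_nonneg.2 hKH) (by linarith : (0:ℝ) ≤ p-1),
      mul_nonneg (mul_nonneg (by linarith : (0:ℝ) ≤ p-1) (by linarith : (0:ℝ) ≤ 2-p))
        (sq_nonneg (U+V))]
  have hDX : DX ≤ 0 := by
    rw [hDXdef]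
    nlinarith [mul_nonneg (sub_nonneg.2 hub) (by linarith : (0:ℝ) ≤ 2-p),
      mul_nonneg (sub_nonneg.2 hKH) (by linarith : (0:ℝ) ≤ p-1)]
  have hdrop : 0 ≤ p*(2-p)*(X+Y)*Y^2*(H2-U^2) := by
    apply mul_nonneg
    apply mul_nonneg
    apply mul_nonneg
    · apply mul_nonneg hp0.le; linarith
    · linarith
    · exact sq_nonneg Y
    · linarith
  have hble : (((p-1) * WY - 1 * WX) * (X + Y)^2
      + 2*(p-1) * ((p-1) * V - 1 * U) * (X + Y) * (U + V)
      + (p-1)*(p-2) * ((p-1) * Y - 1 * X) * (U + V)^2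
      + (p-1) * ((p-1) * Y - 1 * X) * (X + Y) * (WX + WY)) * (X * Y) ≤ 0 := by
    rw [key]
    have h1 : X*DX + Y*DY ≤ 0 :=
      add_nonpos (mul_nonpos_of_nonneg_of_nonpos hX.le hDX)
        (mul_nonpos_of_nonneg_of_nonpos hY.le hDY)
    nlinarith [mul_nonpos_of_nonneg_of_nonpos hxy.le h1]
  by_contra hcon
  push_neg at hcon
  nlinarith [mul_pos hcon hxy]



lemma sqrt_pack (a b C E : ℝ) (hE : 0 < E) (hQ : ∀ t : ℝ, 0 ≤ a + 2*t*b + t^2*C)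
    (hCS : b^2 ≤ a*C) (hC : 0 ≤ C) :
    ∃ f fd fdd : ℝ → ℝ,
      (∀ t, f t = Real.sqrt (a + 2*t*b + t^2*C + E)) ∧
      (∀ t, 0 < f t) ∧ (∀ t, HasDerivAt f (fd t) t) ∧ (∀ t, HasDerivAt fd (fdd t) t) ∧
      (∀ t, f t * fdd t + (fd t)^2 = C) ∧ (∀ t, (fd t)^2 ≤ C) := by
  have hpos : ∀ t : ℝ, 0 < a + 2*t*b + t^2*C + E := fun t => by linarith [hQ t]
  set f : ℝ → ℝ := fun t => Real.sqrt (a + 2*t*b + t^2*C + E) with hfdef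
  set fd : ℝ → ℝ := fun t => (b + t*C) / f t with hfddef
  set fdd : ℝ → ℝ := fun t => (C - ((b + t*C) / f t)^2) / f t with hfdddef
  have hfpos : ∀ t, 0 < f t := fun t => Real.sqrt_pos.2 (hpos t)
  have hfne : ∀ t, f t ≠ 0 := fun t => ne_of_gt (hfpos t)
  have hfsq : ∀ t, (f t)^2 = a + 2*t*b + t^2*C + E := fun t => Real.sq_sqrt (hpos t).le
  have hquad : ∀ t : ℝ, HasDerivAt (fun s : ℝ => a + 2*s*b + s^2*C + E) (2*b + 2*t*C) t := by
    intro t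
    have i2 : HasDerivAt (fun s : ℝ => s^2) (2*t) t := by simpa using hasDerivAt_pow 2 t
    have i3 := ((hasDerivAt_id t).const_mul 2).mul_const b
    have h := ((i3.const_add a).add (i2.mul_const C)).add_const E
    refine h.congr_deriv ?_
    ring
  have hf' : ∀ t, HasDerivAt f (fd t) t := by
    intro t
    have h := (Real.hasDerivAt_sqrt (ne_of_gt (hpos t))).comp t (hquad t)
    have heq : fd t = (1 / (2 * Real.sqrt (a + 2*t*b + t^2*C + E))) * (2*b + 2*t*C) := by
      rw [hfddef]
      simp only [hfdef]
      field_simp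
    rw [heq]
    exact h
  have hfd' : ∀ t, HasDerivAt fd (fdd t) t := by
    intro t
    have hnum : HasDerivAt (fun s : ℝ => b + s*C) (1*C) t :=
      ((hasDerivAt_id t).mul_const C).const_add b
    have h := hnum.div (hf' t) (hfne t)
    have heq : fdd t = (1*C * f t - (b + t*C) * fd t) / (f t)^2 := by
      rw [hfdddef, hfddef]
      simp only []
      field_simp [hfne t]
    rw [heq]
    exact h
  refine ⟨f, fd, fdd, fun t => rfl, hfpos, hf', hfd', ?_, ?_⟩
  · intro t
    rw [hfdddef, hfddef]
    simp only []
    field_simp [hfne t]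
    ring
  · intro t
    rw [hfddef]
    simp only []
    rw [div_pow, div_le_iff₀ (pow_pos (hfpos t) 2), hfsq t]
    nlinarith [hCS, mul_nonneg hC hE.le]

lemma core_applied (p d e ax bx Cx ay bY Cy Ex Ey : ℝ) (hp : 1 < p)
    (hEx : 0 < Ex) (hEy : 0 < Ey)
    (hQx : ∀ t : ℝ, 0 ≤ ax + 2*t*bx + t^2*Cx) (hCSx : bx^2 ≤ ax*Cx) (hCx : 0 ≤ Cx)
    (hQy : ∀ t : ℝ, 0 ≤ ay + 2*t*bY + t^2*Cy) (hCSy : bY^2 ≤ ay*Cy) (hCy : 0 ≤ Cy)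
    (hKH : Cy ≤ Cx)
    (hcase : (2 ≤ p ∧ d = 1 ∧ e = p-1) ∨ (p ≤ 2 ∧ d = p-1 ∧ e = 1)) :
    ConcaveOn ℝ univ (fun t => (d * Real.sqrt (ay + 2*t*bY + t^2*Cy + Ey)
        - e * Real.sqrt (ax + 2*t*bx + t^2*Cx + Ex))
      * (Real.sqrt (ax + 2*t*bx + t^2*Cx + Ex) + Real.sqrt (ay + 2*t*bY + t^2*Cy + Ey))^(p-1)) := by
  obtain ⟨x, u, wx, hxeq, hxpos, hx, hu, hxr, hub⟩ := sqrt_pack ax bx Cx Ex hEx hQx hCSx hCx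
  obtain ⟨y, v, wy, hyeq, hypos, hy, hv, hyr, hvb⟩ := sqrt_pack ay bY Cy Ey hEy hQy hCSy hCy
  have hfeq : (fun t => (d * y t - e * x t) * (x t + y t)^(p-1))
      = (fun t => (d * Real.sqrt (ay + 2*t*bY + t^2*Cy + Ey)
        - e * Real.sqrt (ax + 2*t*bx + t^2*Cx + Ex))
      * (Real.sqrt (ax + 2*t*bx + t^2*Cx + Ex) + Real.sqrt (ay + 2*t*bY + t^2*Cy + Ey))^(p-1)) :=
    funext fun t => by rw [hxeq t, hyeq t]
  rw [← hfeq]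
  apply core_general p d e hp x y u v wx wy hx hu hy hv
    (fun t => add_pos (hxpos t) (hypos t))
  intro t
  have hWX : x t * wx t = Cx - (u t)^2 := by linarith [hxr t]
  have hWY : y t * wy t = Cy - (v t)^2 := by linarith [hyr t]
  rcases hcase with ⟨hp2, hd, he⟩ | ⟨hp2, hd, he⟩
  · rw [hd, he]
    exact case1_Br p Cx Cy (x t) (y t) (u t) (v t) (wx t) (wy t) hp2 (hxpos t) (hypos t)
      hWX hWY (hub t) (hvb t) hKH
  · rw [hd, he]
    exact case2_Br p Cx Cy (x t) (y t) (u t) (v t) (wx t) (wy t) hp hp2 (hxpos t) (hypos t)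
      hWX hWY (hub t) (hvb t) hKH


lemma re_inner_smul_right {𝕜 : Type*} {ℍ : Type*} [RCLike 𝕜] [NormedAddCommGroup ℍ]
    [InnerProductSpace 𝕜 ℍ] [NormedSpace ℝ ℍ] [IsScalarTower ℝ 𝕜 ℍ] (a b : ℍ) (t : ℝ) :
    RCLike.re ((inner 𝕜 a (t • b))) = t * RCLike.re ((inner 𝕜 a b)) := by
  rw [RCLike.real_smul_eq_coe_smul (K := 𝕜) t b, inner_smul_right]
  rw [RCLike.mul_re, RCLike.ofReal_re, RCLike.ofReal_im]
  ring

lemma norm_sq_expand {𝕜 : Type*} {ℍ : Type*} [RCLike 𝕜] [NormedAddCommGroup ℍ]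
    [InnerProductSpace 𝕜 ℍ] [NormedSpace ℝ ℍ] [IsScalarTower ℝ 𝕜 ℍ] (z h : ℍ) (t : ℝ) :
    ‖z + t • h‖^2 = ‖z‖^2 + 2*t*(RCLike.re ((inner 𝕜 z h))) + t^2*‖h‖^2 := by
  have h1 : ‖z + t • h‖^2 = RCLike.re ((inner 𝕜 (z + t•h) (z + t•h))) :=
    (inner_self_eq_norm_sq _).symm
  rw [h1, inner_add_add_self]
  simp only [map_add]
  have e1 : RCLike.re ((inner 𝕜 z (t•h))) = t * RCLike.re ((inner 𝕜 z h)) :=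
    re_inner_smul_right z h t
  have e2 : RCLike.re ((inner 𝕜 (t•h) z)) = t * RCLike.re ((inner 𝕜 z h)) := by
    rw [inner_re_symm]; exact re_inner_smul_right z h t
  have e3 : RCLike.re ((inner 𝕜 (t•h) (t•h))) = t * (t * RCLike.re ((inner 𝕜 h h))) := by
    rw [re_inner_smul_right (t•h) h t]
    congr 1
    rw [inner_re_symm]; exact re_inner_smul_right h h t
  rw [e1, e2, e3, inner_self_eq_norm_sq, inner_self_eq_norm_sq]
  ring

lemma cs_sq {𝕜 : Type*} {ℍ : Type*} [RCLike 𝕜] [NormedAddCommGroup ℍ]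
    [InnerProductSpace 𝕜 ℍ] (z h : ℍ) :
    (RCLike.re ((inner 𝕜 z h)))^2 ≤ ‖z‖^2 * ‖h‖^2 := by
  have h1 : |RCLike.re ((inner 𝕜 z h))| ≤ ‖(inner 𝕜 z h)‖ := RCLike.abs_re_le_norm _
  have h2 : ‖(inner 𝕜 z h)‖ ≤ ‖z‖ * ‖h‖ := norm_inner_le_norm z h
  nlinarith [abs_nonneg (RCLike.re ((inner 𝕜 z h))), sq_abs (RCLike.re ((inner 𝕜 z h))),
    norm_nonneg (inner 𝕜 z h), norm_nonneg z, norm_nonneg h]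

/-- non-degenerate case of part (ii) -/
lemma concave_ND (𝕜 : Type*) {ℍ : Type*} [RCLike 𝕜] [NormedAddCommGroup ℍ]
    [InnerProductSpace 𝕜 ℍ] [NormedSpace ℝ ℍ] [IsScalarTower ℝ 𝕜 ℍ]
    (p d e : ℝ) (hp : 1 < p)
    (hcase : (2 ≤ p ∧ d = 1 ∧ e = p-1) ∨ (p ≤ 2 ∧ d = p-1 ∧ e = 1))
    (z w h k : ℍ) (hkh : ‖k‖ ≤ ‖h‖)
    (hND : ∀ t : ℝ, 0 < ‖z + t • h‖ + ‖w + t • k‖) :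
    ConcaveOn ℝ univ
      (fun t : ℝ => (d * ‖w + t • k‖ - e * ‖z + t • h‖) * (‖z + t • h‖ + ‖w + t • k‖)^(p-1)) := by
  set ax : ℝ := ‖z‖^2 with haxdef
  set bx : ℝ := RCLike.re ((inner 𝕜 z h)) with hbxdef
  set Cx : ℝ := ‖h‖^2 with hCxdef
  set ay : ℝ := ‖w‖^2 with haydef
  set bY : ℝ := RCLike.re ((inner 𝕜 w k)) with hbydef
  set Cy : ℝ := ‖k‖^2 with hCydef
  have hQx : ∀ t : ℝ, ax + 2*t*bx + t^2*Cx = ‖z + t•h‖^2 := by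
    intro t; rw [haxdef, hbxdef, hCxdef]; exact (norm_sq_expand z h t).symm
  have hQy : ∀ t : ℝ, ay + 2*t*bY + t^2*Cy = ‖w + t•k‖^2 := by
    intro t; rw [haydef, hbydef, hCydef]; exact (norm_sq_expand w k t).symm
  have hQx0 : ∀ t : ℝ, 0 ≤ ax + 2*t*bx + t^2*Cx := fun t => (hQx t) ▸ sq_nonneg _
  have hQy0 : ∀ t : ℝ, 0 ≤ ay + 2*t*bY + t^2*Cy := fun t => (hQy t) ▸ sq_nonneg _
  have hKH : Cy ≤ Cx := by
    rw [hCydef, hCxdef]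
    exact pow_le_pow_left₀ (norm_nonneg _) hkh 2
  -- ε-approximations are concave
  have hconcn : ∀ n : ℕ, ConcaveOn ℝ univ
      (fun t => (d * Real.sqrt (ay + 2*t*bY + t^2*Cy + (1/((n:ℝ)+1))^2)
        - e * Real.sqrt (ax + 2*t*bx + t^2*Cx + (1/((n:ℝ)+1))^2))
      * (Real.sqrt (ax + 2*t*bx + t^2*Cx + (1/((n:ℝ)+1))^2)
        + Real.sqrt (ay + 2*t*bY + t^2*Cy + (1/((n:ℝ)+1))^2))^(p-1)) := by
    intro n
    have hn : (0:ℝ) < (1/((n:ℝ)+1))^2 := by positivity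
    refine core_applied p d e ax bx Cx ay bY Cy _ _ hp hn hn hQx0 ?_ ?_ hQy0 ?_ ?_ hKH hcase
    · rw [hbxdef, haxdef, hCxdef]; exact cs_sq z h
    · rw [hCxdef]; exact sq_nonneg _
    · rw [hbydef, haydef, hCydef]; exact cs_sq w k
    · rw [hCydef]; exact sq_nonneg _
  -- pointwise limits
  have hEn : Tendsto (fun n : ℕ => (1/((n:ℝ)+1))^2) atTop (𝓝 0) := by
    have h := tendsto_one_div_add_atTop_nhds_zero_nat (𝕜 := ℝ)
    have h2 := h.mul h
    simpa [sq] using h2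
  have hXlim : ∀ t : ℝ, Tendsto (fun n : ℕ => Real.sqrt (ax + 2*t*bx + t^2*Cx + (1/((n:ℝ)+1))^2))
      atTop (𝓝 (‖z + t•h‖)) := by
    intro t
    have h1 : Tendsto (fun n : ℕ => ax + 2*t*bx + t^2*Cx + (1/((n:ℝ)+1))^2) atTop
        (𝓝 (ax + 2*t*bx + t^2*Cx + 0)) := tendsto_const_nhds.add hEn
    have h2 := (Real.continuous_sqrt.continuousAt).tendsto.comp h1
    have h3 : Real.sqrt (ax + 2*t*bx + t^2*Cx + 0) = ‖z + t•h‖ := by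
      rw [add_zero, hQx t, Real.sqrt_sq (norm_nonneg _)]
    rw [h3] at h2
    exact h2
  have hYlim : ∀ t : ℝ, Tendsto (fun n : ℕ => Real.sqrt (ay + 2*t*bY + t^2*Cy + (1/((n:ℝ)+1))^2))
      atTop (𝓝 (‖w + t•k‖)) := by
    intro t
    have h1 : Tendsto (fun n : ℕ => ay + 2*t*bY + t^2*Cy + (1/((n:ℝ)+1))^2) atTop
        (𝓝 (ay + 2*t*bY + t^2*Cy + 0)) := tendsto_const_nhds.add hEn
    have h2 := (Real.continuous_sqrt.continuousAt).tendsto.comp h1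
    have h3 : Real.sqrt (ay + 2*t*bY + t^2*Cy + 0) = ‖w + t•k‖ := by
      rw [add_zero, hQy t, Real.sqrt_sq (norm_nonneg _)]
    rw [h3] at h2
    exact h2
  have hFlim : ∀ t : ℝ, Tendsto (fun n : ℕ =>
      (d * Real.sqrt (ay + 2*t*bY + t^2*Cy + (1/((n:ℝ)+1))^2)
        - e * Real.sqrt (ax + 2*t*bx + t^2*Cx + (1/((n:ℝ)+1))^2))
      * (Real.sqrt (ax + 2*t*bx + t^2*Cx + (1/((n:ℝ)+1))^2)
        + Real.sqrt (ay + 2*t*bY + t^2*Cy + (1/((n:ℝ)+1))^2))^(p-1)) atTop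
      (𝓝 ((d * ‖w + t • k‖ - e * ‖z + t • h‖) * (‖z + t • h‖ + ‖w + t • k‖)^(p-1))) := by
    intro t
    have hsum := (hXlim t).add (hYlim t)
    have hpow := ((Real.continuousAt_rpow_const (‖z + t•h‖ + ‖w + t•k‖) (p-1)
      (Or.inl (ne_of_gt (hND t)))).tendsto).comp hsum
    exact ((tendsto_const_nhds.mul (hYlim t)).sub (tendsto_const_nhds.mul (hXlim t))).mul hpow
  refine ⟨convex_univ, ?_⟩
  intro σ _ τ _ a b ha hb hab
  have h1 := ((hFlim σ).const_smul a).add ((hFlim τ).const_smul b)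
  have h2 := hFlim (a • σ + b • τ)
  refine le_of_tendsto_of_tendsto' h1 h2 ?_
  intro n
  exact (hconcn n).2 (mem_univ σ) (mem_univ τ) ha hb hab



lemma concave_deg (p : ℝ) (hp : 1 < p) (CC t0 : ℝ) (hCC : CC ≤ 0) :
    ConcaveOn ℝ univ (fun t : ℝ => CC * |t - t0| ^ p) := by
  have hp0 : (0:ℝ) < p := by linarith
  have habs : ConvexOn ℝ univ (fun t : ℝ => |t - t0|) := by
    refine ⟨convex_univ, ?_⟩
    intro x _ y _ a b ha hb hab
    simp only [smul_eq_mul]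
    have he : a * x + b * y - t0 = a * (x - t0) + b * (y - t0) := by
      linear_combination t0 * hab
    rw [he]
    calc |a * (x - t0) + b * (y - t0)| ≤ |a * (x - t0)| + |b * (y - t0)| := abs_add_le _ _
      _ = a * |x - t0| + b * |y - t0| := by
          rw [abs_mul, abs_mul, abs_of_nonneg ha, abs_of_nonneg hb]
  have himg : (fun t : ℝ => |t - t0|) '' univ = Ici 0 := by
    ext r
    simp only [mem_image, mem_univ, true_and, mem_Ici]
    constructor
    · rintro ⟨t, rfl⟩; exact abs_nonneg _
    · intro hr
      exact ⟨t0 + r, by rw [add_sub_cancel_left]; exact abs_of_nonneg hr⟩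
  have hmono : MonotoneOn (fun s : ℝ => s ^ p) ((fun t : ℝ => |t - t0|) '' univ) := by
    rw [himg]
    intro a ha b _ hab
    exact Real.rpow_le_rpow ha hab hp0.le
  have hrpow : ConvexOn ℝ ((fun t : ℝ => |t - t0|) '' univ) (fun s : ℝ => s ^ p) := by
    rw [himg]; exact convexOn_rpow hp.le
  have hcomp : ConvexOn ℝ univ ((fun s : ℝ => s ^ p) ∘ (fun t : ℝ => |t - t0|)) :=
    ConvexOn.comp hrpow habs hmono
  have hsm := (hcomp.smul (neg_nonneg.2 hCC)).neg
  have heq : (fun t : ℝ => CC * |t - t0| ^ p)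
      = -(fun t => (-CC) • ((fun s : ℝ => s ^ p) ∘ (fun t : ℝ => |t - t0|)) t) := by
    funext t
    simp only [Function.comp, Pi.neg_apply, smul_eq_mul]
    ring
  rw [heq]
  exact hsm

lemma part2_gen (𝕜 : Type*) {ℍ : Type*} [RCLike 𝕜] [NormedAddCommGroup ℍ]
    [InnerProductSpace 𝕜 ℍ] [NormedSpace ℝ ℍ] [IsScalarTower ℝ 𝕜 ℍ]
    (p d e s₀ : ℝ) (hp : 1 < p) (hs₀ : 0 ≤ s₀)
    (hcase : (2 ≤ p ∧ d = 1 ∧ e = p-1) ∨ (p ≤ 2 ∧ d = p-1 ∧ e = 1))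
    (z w h k : ℍ) (hkh : ‖k‖ ≤ ‖h‖) :
    ConcaveOn ℝ univ (fun t : ℝ =>
      s₀ * ((d * ‖w + t • k‖ - e * ‖z + t • h‖) * (‖z + t • h‖ + ‖w + t • k‖)^(p-1))) := by
  have hpne : p ≠ 0 := by positivity
  have hp1ne : p - 1 ≠ 0 := by intro hh; linarith [hh]
  by_cases hdeg : ∃ t0 : ℝ, z + t0 • h = 0 ∧ w + t0 • k = 0
  · obtain ⟨t0, hz0, hw0⟩ := hdeg
    have hz : ∀ t : ℝ, z + t • h = (t - t0) • h := by
      intro t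
      have hzv : z = -(t0 • h) := by
        have := hz0; rw [add_eq_zero_iff_eq_neg] at this; exact this
      rw [hzv, sub_smul]; abel
    have hw : ∀ t : ℝ, w + t • k = (t - t0) • k := by
      intro t
      have hwv : w = -(t0 • k) := by
        have := hw0; rw [add_eq_zero_iff_eq_neg] at this; exact this
      rw [hwv, sub_smul]; abel
    have hnx : ∀ t : ℝ, ‖z + t • h‖ = |t - t0| * ‖h‖ := by
      intro t; rw [hz t, norm_smul, Real.norm_eq_abs]
    have hny : ∀ t : ℝ, ‖w + t • k‖ = |t - t0| * ‖k‖ := by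
      intro t; rw [hw t, norm_smul, Real.norm_eq_abs]
    have heq : (fun t : ℝ =>
        s₀ * ((d * ‖w + t • k‖ - e * ‖z + t • h‖) * (‖z + t • h‖ + ‖w + t • k‖)^(p-1)))
        = fun t : ℝ => (s₀ * ((d * ‖k‖ - e * ‖h‖) * (‖h‖ + ‖k‖)^(p-1))) * |t - t0|^p := by
      funext t
      rw [hnx t, hny t]
      have e1 : |t - t0| * ‖h‖ + |t - t0| * ‖k‖ = |t - t0| * (‖h‖ + ‖k‖) := by ring
      rw [e1, Real.mul_rpow (abs_nonneg _) (by positivity)]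
      rcases eq_or_ne (|t - t0|) 0 with h0 | h0
      · rw [h0, Real.zero_rpow hpne, Real.zero_rpow hp1ne]; ring
      · have e2 : |t - t0|^p = |t - t0|^(p-1) * |t - t0| := by
          have hh := Real.rpow_add_one h0 (p-1)
          rw [show p - 1 + 1 = p by ring] at hh
          exact hh
        rw [e2]; ring
    rw [heq]
    apply concave_deg p hp _ t0
    have hde : d * ‖k‖ - e * ‖h‖ ≤ 0 := by
      rcases hcase with ⟨hp2, hd, he⟩ | ⟨hp2, hd, he⟩ <;> rw [hd, he]
      · nlinarith [hkh, norm_nonneg h, norm_nonneg k,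
          mul_nonneg (by linarith : (0:ℝ) ≤ p - 2) (norm_nonneg h)]
      · nlinarith [hkh, norm_nonneg h, norm_nonneg k,
          mul_nonneg (by linarith : (0:ℝ) ≤ 2 - p) (norm_nonneg k)]
    exact mul_nonpos_of_nonneg_of_nonpos hs₀
      (mul_nonpos_of_nonpos_of_nonneg hde (Real.rpow_nonneg (by positivity) _))
  · push_neg at hdeg
    have hND : ∀ t : ℝ, 0 < ‖z + t • h‖ + ‖w + t • k‖ := by
      intro t
      by_cases hz0 : z + t • h = 0
      · have := norm_pos_iff.2 (hdeg t hz0)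
        linarith [norm_nonneg (z + t • h)]
      · have := norm_pos_iff.2 hz0
        linarith [norm_nonneg (w + t • k)]
    have hc := (concave_ND 𝕜 p d e hp hcase z w h k hkh hND).smul hs₀
    have heq : (fun t : ℝ =>
        s₀ * ((d * ‖w + t • k‖ - e * ‖z + t • h‖) * (‖z + t • h‖ + ‖w + t • k‖)^(p-1)))
        = fun t : ℝ => s₀ • ((d * ‖w + t • k‖ - e * ‖z + t • h‖)
            * (‖z + t • h‖ + ‖w + t • k‖)^(p-1)) := by
      funext t; simp [smul_eq_mul]
    rw [heq]
    exact hc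


end Stmt19

open Stmt19 Set in
/-- properties of Burkholder's functions `U` and `V`: let `ℍ` be a
(real or complex) Hilbert space, `1 < p < ∞`, `p* = max(p,q)` with `1/p + 1/q = 1`,
`α_p = p (1 - 1/p*)^{p-1}`, `V(z,w) = |w|^p - (p*-1)^p |z|^p` and
`U(z,w) = α_p (|w| - (p*-1)|z|)(|z| + |w|)^{p-1}`. Then `V ≤ U` everywhere, and
for `|k| ≤ |h|` the map `t ↦ U(z + t h, w + t k)` is concave on `ℝ`. -/
theorem stmt_19 (𝕜 : Type*) [RCLike 𝕜] (ℍ : Type*) [NormedAddCommGroup ℍ]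
    [InnerProductSpace 𝕜 ℍ] [NormedSpace ℝ ℍ] [IsScalarTower ℝ 𝕜 ℍ] [CompleteSpace ℍ]
    (p q : ℝ) (hp : 1 < p) (hq : 1 / p + 1 / q = 1)
    (pstar αp : ℝ) (hpstar : pstar = max p q) (hαp : αp = p * (1 - 1 / pstar) ^ (p - 1))
    (V U : ℍ → ℍ → ℝ)
    (hV : ∀ z w : ℍ, V z w = ‖w‖ ^ p - (pstar - 1) ^ p * ‖z‖ ^ p)
    (hU : ∀ z w : ℍ, U z w = αp * (‖w‖ - (pstar - 1) * ‖z‖) * (‖z‖ + ‖w‖) ^ (p - 1)) :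
    (∀ z w : ℍ, V z w ≤ U z w) ∧
      ∀ z w h k : ℍ, ‖k‖ ≤ ‖h‖ →
        ConcaveOn ℝ Set.univ (fun t : ℝ => U (z + t • h) (w + t • k)) := by
  have hp0 : (0:ℝ) < p := by linarith
  have hpm1 : (0:ℝ) < p - 1 := by linarith
  have hpne : p ≠ 0 := ne_of_gt hp0
  have hqne : q ≠ 0 := by
    intro h0
    rw [h0, div_zero, add_zero] at hq
    have hp1 : p = 1 := by field_simp at hq; linarith
    linarith
  have hqv : q * (p - 1) = p := by
    field_simp [hpne, hqne] at hq
    linarith [hq]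
  have hps : (2 ≤ p ∧ pstar = p) ∨ (p ≤ 2 ∧ pstar = q) := by
    rcases le_total q p with hqp | hpq
    · left
      refine ⟨?_, by rw [hpstar]; exact max_eq_left hqp⟩
      nlinarith [hqv, mul_le_mul_of_nonneg_right hqp hpm1.le, hp0]
    · right
      refine ⟨?_, by rw [hpstar]; exact max_eq_right hpq⟩
      nlinarith [hqv, mul_le_mul_of_nonneg_right hpq hpm1.le, hp0]
  have hps1 : 1 < pstar := by
    rcases hps with ⟨h2, hpe⟩ | ⟨h2, hpe⟩ <;> rw [hpe]
    · linarith
    · by_contra hcon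
      push_neg at hcon
      nlinarith [hqv, mul_le_mul_of_nonneg_right hcon hpm1.le]
  set c : ℝ := pstar - 1 with hcdef
  have hc0 : 0 < c := by rw [hcdef]; linarith
  have hcs : (2 ≤ p ∧ c = p - 1) ∨ (p ≤ 2 ∧ c * (p-1) = 1) := by
    rcases hps with ⟨h2, hpe⟩ | ⟨h2, hpe⟩
    · exact Or.inl ⟨h2, by rw [hcdef, hpe]⟩
    · refine Or.inr ⟨h2, ?_⟩
      rw [hcdef, hpe]
      linear_combination hqv
  have hc1 : 1 ≤ c := by
    rcases hcs with ⟨h2, he⟩ | ⟨h2, he⟩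
    · rw [he]; linarith
    · by_contra hcon
      push_neg at hcon
      nlinarith [he, mul_lt_mul_of_pos_right hcon hpm1]
  have h1cpos : (0:ℝ) < 1 + c := by linarith
  have hαp_c : αp = p * (c/(1+c))^(p-1) := by
    rw [hαp]
    have hbase : 1 - 1/pstar = c/(1+c) := by
      have hpsne : pstar ≠ 0 := by intro h0; rw [h0] at hps1; linarith
      rw [hcdef]
      rw [show 1 + (pstar - 1) = pstar by ring]
      field_simp
    rw [hbase]
  have hαp_pos : 0 ≤ αp := by
    rw [hαp_c]
    have : (0:ℝ) ≤ c/(1+c) := by positivity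
    exact mul_nonneg hp0.le (Real.rpow_nonneg this _)
  have hfar : (2 ≤ p ∧ (1+c)^(p-2) ≤ c^(p-1)) ∨ (p ≤ 2 ∧ (1+c)^(2-p) ≤ c) := by
    rcases hcs with ⟨h2, he⟩ | ⟨h2, he⟩
    · refine Or.inl ⟨h2, ?_⟩
      rw [he, show 1 + (p-1) = p by ring]
      exact far_ineq1 p h2
    · refine Or.inr ⟨h2, ?_⟩
      have hcv : c = 1/(p-1) := by
        field_simp
        linear_combination he
      rw [hcv, show 1 + 1/(p-1) = p/(p-1) by field_simp; ring]
      exact far_ineq2 p hp h2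
  constructor
  · intro z w
    rw [hV z w, hU z w, hαp_c]
    exact scalar_main hp hc1 hfar ‖z‖ ‖w‖ (norm_nonneg z) (norm_nonneg w)
  · intro z w h k hkh
    have hUfun : (fun t : ℝ => U (z + t • h) (w + t • k))
        = fun t : ℝ => αp * (‖w + t • k‖ - c * ‖z + t • h‖)
            * (‖z + t • h‖ + ‖w + t • k‖)^(p-1) := by
      funext t
      rw [hU]
    rw [hUfun]
    rcases hcs with ⟨h2, he⟩ | ⟨h2, he⟩
    · have heq2 : (fun t : ℝ => αp * (‖w + t • k‖ - c * ‖z + t • h‖)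
            * (‖z + t • h‖ + ‖w + t • k‖)^(p-1))
          = fun t : ℝ => αp * (((1:ℝ) * ‖w + t • k‖ - (p-1) * ‖z + t • h‖)
            * (‖z + t • h‖ + ‖w + t • k‖)^(p-1)) := by
        funext t
        rw [he]
        ring
      rw [heq2]
      exact part2_gen 𝕜 p 1 (p-1) αp hp hαp_pos (Or.inl ⟨h2, rfl, rfl⟩) z w h k hkh
    · have heq2 : (fun t : ℝ => αp * (‖w + t • k‖ - c * ‖z + t • h‖)
            * (‖z + t • h‖ + ‖w + t • k‖)^(p-1))
          = fun t : ℝ => (αp * c) * (((p-1) * ‖w + t • k‖ - (1:ℝ) * ‖z + t • h‖)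
            * (‖z + t • h‖ + ‖w + t • k‖)^(p-1)) := by
        funext t
        linear_combination (-(αp * ‖w + t • k‖ * (‖z + t • h‖ + ‖w + t • k‖)^(p-1))) * he
      rw [heq2]
      exact part2_gen 𝕜 p (p-1) 1 (αp * c) hp (mul_nonneg hαp_pos hc0.le)
        (Or.inr ⟨h2, rfl, rfl⟩) z w h k hkh
end
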